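/- arXiv:1905.07298 — 3 statements merged into one kernel-verified Lean document; each statement's English description precedes it below -/
import Mathlib

section
/- Let (X, cl) be a finitary matroid (pregeometry) and δ : X → X a quasi-endomorphism, meaning rk(δA | A ∪ B ∪ δB) ≤ rk(A | B) for all A, B ⊆ X. Define a ∈ cl^δ(B) iff rk(J^∞(a) | J^∞(B)) < ℵ₀, where J^∞(a) = {δⁱa : i < ω} and J^∞(B) = ∪_{b∈B} J^∞(b). Then (X, cl^δ) is again a finitary matroid (pregeometry). -/
/-- A finitary matroid (pregeometry) on a type `X`, given by a closure operator. -/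
structure Pregeometry (X : Type*) where
  cl : Set X → Set X
  subset_cl : ∀ A : Set X, A ⊆ cl A
  mono : ∀ A B : Set X, A ⊆ B → cl A ⊆ cl B
  cl_cl : ∀ A : Set X, cl (cl A) = cl A
  finitary : ∀ (A : Set X) (a : X), a ∈ cl A → ∃ F : Finset X, ↑F ⊆ A ∧ a ∈ cl ↑F
  exchange : ∀ (a b : X) (A : Set X), a ∈ cl (A ∪ {b}) → a ∉ cl A → b ∈ cl (A ∪ {a})

/-- `S` is independent over `B` with respect to a closure operator. -/
def clIndep {X : Type*} (cl : Set X → Set X) (B S : Set X) : Prop :=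
  ∀ s ∈ S, s ∉ cl (B ∪ (S \ {s}))

/-- The rank of `A` over `B` with respect to a closure operator: the supremum of the
cardinalities of subsets of `A` independent over `B`. -/
noncomputable def clRank {X : Type*} (cl : Set X → Set X) (A B : Set X) : Cardinal :=
  ⨆ S : {S : Set X // S ⊆ A ∧ clIndep cl B S}, Cardinal.mk S.1

/-- The set of all iterated images `δⁱ a` for `a ∈ A`, `i < ω` (the infinite jet). -/
def Jinf {X : Type*} (δ : X → X) (A : Set X) : Set X :=
  ⋃ a ∈ A, Set.range fun i : ℕ => δ^[i] a

/-- The jet `{δⁱ a : a ∈ A, i ≤ n}`. -/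
def Jle {X : Type*} (δ : X → X) (A : Set X) (n : ℕ) : Set X :=
  ⋃ a ∈ A, (fun i : ℕ => δ^[i] a) '' {i | i ≤ n}

/-- The jet `{δⁱ a : a ∈ A, i < n}` (so `Jlt δ A 0 = ∅`, playing the role of `J^{-1}`). -/
def Jlt {X : Type*} (δ : X → X) (A : Set X) (n : ℕ) : Set X :=
  ⋃ a ∈ A, (fun i : ℕ => δ^[i] a) '' {i | i < n}

/-- `δ` is a quasi-endomorphism of the pregeometry `P`:
`rk(δA | A ∪ B ∪ δB) ≤ rk(A | B)` for all `A, B`. -/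
def IsQuasiEndo {X : Type*} (P : Pregeometry X) (δ : X → X) : Prop :=
  ∀ A B : Set X, clRank P.cl (δ '' A) (A ∪ B ∪ δ '' B) ≤ clRank P.cl A B

/-- The `δ`-closure operator: `a ∈ cl^δ(B)` iff `rk(J^∞(a) | J^∞(B))` is finite. -/
noncomputable def clDelta {X : Type*} (P : Pregeometry X) (δ : X → X) : Set X → Set X :=
  fun B => {a | clRank P.cl (Jinf δ {a}) (Jinf δ B) < Cardinal.aleph0}

namespace ClD

open Set

variable {X : Type*} (P : Pregeometry X)

/-! ### basic closure lemmas -/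

lemma cl_union_cl_subset {A B C : Set X} (h : B ⊆ P.cl C) :
    P.cl (A ∪ B) ⊆ P.cl (A ∪ C) := by
  have h1 : A ∪ B ⊆ P.cl (A ∪ C) := by
    apply union_subset
    · exact (subset_union_left).trans (P.subset_cl _)
    · exact h.trans (P.mono _ _ subset_union_right)
  have := P.mono _ _ h1
  rwa [P.cl_cl] at this

/-! ### independence -/

lemma clIndep_empty (C : Set X) : clIndep P.cl C ∅ := by
  intro s hs; exact absurd hs (notMem_empty s)

lemma clIndep_mono_base {C C' S : Set X} (h : clIndep P.cl C' S) (hCC : C ⊆ C') :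
    clIndep P.cl C S := fun s hs hm =>
  h s hs (P.mono _ _ (union_subset_union_left _ hCC) hm)

lemma clIndep_subset {C S T : Set X} (h : clIndep P.cl C S) (hT : T ⊆ S) :
    clIndep P.cl C T := fun t ht hm =>
  h t (hT ht) (P.mono _ _ (union_subset_union_right _ (diff_subset_diff_left hT)) hm)

lemma clIndep_singleton {C : Set X} {x : X} (hx : x ∉ P.cl C) :
    clIndep P.cl C {x} := by
  intro s hs
  rcases hs with rfl
  simpa using hx

lemma clIndep_insert {C S : Set X} {x : X} (h : clIndep P.cl C S)
    (hx : x ∉ P.cl (C ∪ S)) : clIndep P.cl C (insert x S) := by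
  have hxS : x ∉ S := fun hxs => hx (P.subset_cl _ (Or.inr hxs))
  intro s hs hm
  rcases eq_or_ne s x with rfl | hne
  · apply hx
    refine P.mono _ _ ?_ hm
    apply union_subset_union_right
    intro z hz
    rcases hz.1 with rfl | hzS
    · exact absurd rfl hz.2
    · exact hzS
  · rcases hs with rfl | hsS
    · exact absurd rfl hne
    · have hmem : s ∈ P.cl ((C ∪ (S \ {s})) ∪ {x}) := by
        refine P.mono _ _ ?_ hm
        intro z hz
        rcases hz with hz | hz
        · exact Or.inl (Or.inl hz)
        · rcases hz.1 with rfl | hzS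
          · exact Or.inr rfl
          · exact Or.inl (Or.inr ⟨hzS, hz.2⟩)
      have hnmem : s ∉ P.cl (C ∪ (S \ {s})) := h s hsS
      have := P.exchange s x _ hmem hnmem
      apply hx
      refine P.mono _ _ ?_ this
      apply union_subset
      · exact union_subset_union_right _ diff_subset
      · intro z hz; rcases hz with rfl; exact Or.inr hsS

/-- minimal-witness exchange -/
lemma exists_exchange {C T : Set X} {x : X} (hT : T.Finite)
    (hx : x ∈ P.cl (C ∪ T)) (hx' : x ∉ P.cl C) :
    ∃ t ∈ T, t ∈ P.cl ((C ∪ (T \ {t})) ∪ {x}) := by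
  classical
  set N := {n | ∃ W, W ⊆ T ∧ W.Finite ∧ x ∈ P.cl (C ∪ W) ∧ W.ncard = n} with hN
  have hNne : N.Nonempty := ⟨T.ncard, T, Subset.rfl, hT, hx, rfl⟩
  obtain ⟨W, hWT, hWfin, hxW, hWcard⟩ := Nat.sInf_mem hNne
  have hWne : W.Nonempty := by
    rcases eq_empty_or_nonempty W with rfl | h
    · exact absurd (P.mono _ _ (by simp) hxW) hx'
    · exact h
  obtain ⟨t, htW⟩ := hWne
  have hmin : x ∉ P.cl (C ∪ (W \ {t})) := by
    intro hmem
    have hlt : (W \ {t}).ncard < sInf N := by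
      rw [← hWcard]
      exact ncard_diff_singleton_lt_of_mem htW hWfin
    have : (W \ {t}).ncard ∈ N :=
      ⟨W \ {t}, (diff_subset).trans hWT, hWfin.diff, hmem, rfl⟩
    exact absurd (Nat.sInf_le this) (not_le.mpr hlt)
  have hxW' : x ∈ P.cl ((C ∪ (W \ {t})) ∪ {t}) := by
    refine P.mono _ _ ?_ hxW
    intro z hz
    rcases hz with hz | hz
    · exact Or.inl (Or.inl hz)
    · rcases eq_or_ne z t with rfl | hne
      · exact Or.inr rfl
      · exact Or.inl (Or.inr ⟨hz, hne⟩)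
  have := P.exchange x t _ hxW' hmin
  refine ⟨t, hWT htW, ?_⟩
  refine P.mono _ _ ?_ this
  apply union_subset
  · apply union_subset
    · exact (subset_union_left).trans subset_union_left
    · refine subset_trans (diff_subset_diff_left hWT) ?_
      exact (subset_union_right).trans subset_union_left
  · exact subset_union_right

/-- Steinitz exchange: an independent set inside the closure of `C ∪ W` has size `≤ |W|`. -/
lemma steinitz : ∀ (n : ℕ) (W C S : Set X), W.Finite → W.ncard = n →
    clIndep P.cl C S → S ⊆ P.cl (C ∪ W) → S.Finite ∧ S.ncard ≤ n := by
  intro n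
  induction n with
  | zero =>
    intro W C S hW hcard hInd hS
    have hWe : W = ∅ := (ncard_eq_zero hW).mp hcard
    subst hWe
    have hSe : S = ∅ := by
      rcases eq_empty_or_nonempty S with rfl | ⟨s, hs⟩
      · rfl
      · exfalso
        apply hInd s hs
        refine P.mono _ _ subset_union_left ?_
        simpa using hS hs
    subst hSe
    simp
  | succ n ih =>
    intro W C S hW hcard hInd hS
    rcases eq_empty_or_nonempty S with rfl | ⟨s, hs⟩
    · simp
    have hsW : s ∈ P.cl (C ∪ W) := hS hs
    have hsC : s ∉ P.cl C := fun h => hInd s hs (P.mono _ _ subset_union_left h)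
    obtain ⟨t, htW, ht⟩ := exists_exchange P hW hsW hsC
    have hcont : P.cl (C ∪ W) ⊆ P.cl ((C ∪ {s}) ∪ (W \ {t})) := by
      have h1 : C ∪ W ⊆ P.cl ((C ∪ {s}) ∪ (W \ {t})) := by
        apply union_subset
        · exact fun z hz => P.subset_cl ((C ∪ {s}) ∪ (W \ {t})) (Or.inl (Or.inl hz))
        · intro w hw
          rcases eq_or_ne w t with rfl | hne
          · refine P.mono _ _ ?_ ht
            intro z hz
            rcases hz with (hz | hz) | hz
            · exact Or.inl (Or.inl hz)
            · exact Or.inr hz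
            · exact Or.inl (Or.inr hz)
          · exact P.subset_cl ((C ∪ {s}) ∪ (W \ {t})) (Or.inr ⟨hw, hne⟩)
      have := P.mono _ _ h1
      rwa [P.cl_cl] at this
    have hInd' : clIndep P.cl (C ∪ {s}) (S \ {s}) := by
      intro u hu hm
      apply hInd u hu.1
      refine P.mono _ _ ?_ hm
      intro z hz
      rcases hz with (hz | hz) | hz
      · exact Or.inl hz
      · rcases hz with rfl; exact Or.inr ⟨hs, fun h => hu.2 (h.symm ▸ rfl)⟩
      · exact Or.inr ⟨hz.1.1, hz.2⟩
    have hS' : S \ {s} ⊆ P.cl ((C ∪ {s}) ∪ (W \ {t})) := fun u hu => hcont (hS hu.1)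
    have hfin : (W \ {t}).Finite := hW.diff
    have hc : (W \ {t}).ncard = n := by
      rw [ncard_diff_singleton_of_mem htW]
      omega
    obtain ⟨h1, h2⟩ := ih (W \ {t}) (C ∪ {s}) (S \ {s}) hfin hc hInd' hS'
    have hsub : S ⊆ insert s (S \ {s}) := by
      intro z hz
      rcases eq_or_ne z s with rfl | hne
      · exact mem_insert _ _
      · exact mem_insert_of_mem _ ⟨hz, hne⟩
    constructor
    · exact (h1.insert s).subset hsub
    · calc S.ncard ≤ (insert s (S \ {s})).ncard :=
            ncard_le_ncard hsub (h1.insert s)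
        _ ≤ (S \ {s}).ncard + 1 := ncard_insert_le _ _
        _ ≤ n + 1 := by omega

lemma steinitz' {W C S : Set X} (hW : W.Finite) (hInd : clIndep P.cl C S)
    (hS : S ⊆ P.cl (C ∪ W)) : S.Finite ∧ S.ncard ≤ W.ncard :=
  steinitz P W.ncard W C S hW rfl hInd hS

/-! ### natural-number rank of finite sets -/

noncomputable def rk (C A : Set X) : ℕ :=
  sSup {n | ∃ S, S ⊆ A ∧ clIndep P.cl C S ∧ S.Finite ∧ S.ncard = n}

lemma rk_set_nonempty (C A : Set X) :
    Set.Nonempty {n | ∃ S, S ⊆ A ∧ clIndep P.cl C S ∧ S.Finite ∧ S.ncard = n} :=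
  ⟨0, ∅, empty_subset _, clIndep_empty P C, finite_empty, ncard_empty X⟩

lemma rk_set_bdd {C A : Set X} (hA : A.Finite) :
    BddAbove {n | ∃ S, S ⊆ A ∧ clIndep P.cl C S ∧ S.Finite ∧ S.ncard = n} := by
  refine ⟨A.ncard, ?_⟩
  rintro n ⟨S, hS, _, _, rfl⟩
  exact ncard_le_ncard hS hA

lemma le_rk {C A S : Set X} (hA : A.Finite) (hS : S ⊆ A) (hi : clIndep P.cl C S) :
    S.ncard ≤ rk P C A :=
  le_csSup (rk_set_bdd P hA) ⟨S, hS, hi, hA.subset hS, rfl⟩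

lemma rk_le_of_subset_cl {C A W : Set X} (hW : W.Finite) (hA : A ⊆ P.cl (C ∪ W)) :
    rk P C A ≤ W.ncard := by
  apply csSup_le (rk_set_nonempty P C A)
  rintro n ⟨S, hS, hi, hfin, rfl⟩
  exact (steinitz' P hW hi (hS.trans hA)).2

lemma rk_le_ncard {C A : Set X} (hA : A.Finite) : rk P C A ≤ A.ncard := by
  refine rk_le_of_subset_cl P hA (subset_trans ?_ (P.subset_cl _))
  exact subset_union_right

lemma rk_exists_basis {C A : Set X} (hA : A.Finite) :
    ∃ S, S ⊆ A ∧ clIndep P.cl C S ∧ S.Finite ∧ S.ncard = rk P C A ∧ A ⊆ P.cl (C ∪ S) := by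
  obtain ⟨S, hSA, hInd, hfin, hcard0⟩ :=
    Nat.sSup_mem (rk_set_nonempty P C A) (rk_set_bdd P hA)
  have hcard : S.ncard = rk P C A := hcard0
  refine ⟨S, hSA, hInd, hfin, hcard, ?_⟩
  intro x hx
  by_contra hxc
  have hIns : clIndep P.cl C (insert x S) := clIndep_insert P hInd hxc
  have hxS : x ∉ S := fun h => hxc (P.subset_cl _ (Or.inr h))
  have hle : (insert x S).ncard ≤ rk P C A :=
    le_rk P hA (insert_subset hx hSA) hIns
  rw [ncard_insert_of_notMem hxS hfin, hcard] at hle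
  omega

lemma rk_mono {C A A' : Set X} (hA' : A'.Finite) (h : A ⊆ A') : rk P C A ≤ rk P C A' := by
  apply csSup_le (rk_set_nonempty P C A)
  rintro n ⟨S, hS, hi, hfin, rfl⟩
  exact le_rk P hA' (hS.trans h) hi

lemma rk_anti_base {C C' A : Set X} (h : C ⊆ C') (hA : A.Finite) :
    rk P C' A ≤ rk P C A := by
  apply csSup_le (rk_set_nonempty P C' A)
  rintro n ⟨S, hS, hi, hfin, rfl⟩
  exact le_rk P hA hS (clIndep_mono_base P hi h)

lemma rk_singleton_eq_zero_iff {C : Set X} {x : X} :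
    rk P C {x} = 0 ↔ x ∈ P.cl C := by
  constructor
  · intro h
    by_contra hx
    have : ({x} : Set X).ncard ≤ rk P C {x} :=
      le_rk P (finite_singleton x) Subset.rfl (clIndep_singleton P hx)
    rw [ncard_singleton, h] at this
    omega
  · intro hx
    apply Nat.le_zero.mp
    apply csSup_le (rk_set_nonempty P C {x})
    rintro n ⟨S, hS, hi, hfin, rfl⟩
    rcases subset_singleton_iff_eq.mp hS with rfl | rfl
    · simp
    · exfalso
      apply hi x rfl
      exact P.mono _ _ subset_union_left hx

lemma rk_union_le (C A B : Set X) (hA : A.Finite) (hB : B.Finite) :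
    rk P C (A ∪ B) ≤ rk P C B + rk P (C ∪ B) A := by
  obtain ⟨SB, hSB, hiB, hfB, hcB, hspB⟩ := rk_exists_basis P (C := C) hB
  obtain ⟨SA, hSA, hiA, hfA, hcA, hspA⟩ := rk_exists_basis P (C := C ∪ B) hA
  have hspan : A ∪ B ⊆ P.cl (C ∪ (SB ∪ SA)) := by
    have hB' : B ⊆ P.cl (C ∪ (SB ∪ SA)) := by
      refine hspB.trans (P.mono _ _ ?_)
      exact union_subset_union_right _ subset_union_left
    apply union_subset
    · refine hspA.trans ?_
      have h1 : (C ∪ B) ∪ SA ⊆ P.cl (C ∪ (SB ∪ SA)) := by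
        apply union_subset
        · apply union_subset
          · exact fun z hz => P.subset_cl (C ∪ (SB ∪ SA)) (Or.inl hz)
          · exact hB'
        · exact fun z hz => P.subset_cl (C ∪ (SB ∪ SA)) (Or.inr (Or.inr hz))
      have := P.mono _ _ h1
      rwa [P.cl_cl] at this
    · exact hB'
  calc rk P C (A ∪ B) ≤ (SB ∪ SA).ncard := rk_le_of_subset_cl P (hfB.union hfA) hspan
    _ ≤ SB.ncard + SA.ncard := ncard_union_le _ _
    _ = rk P C B + rk P (C ∪ B) A := by rw [hcB, hcA]

lemma rk_le_union (C A B : Set X) (hA : A.Finite) (hB : B.Finite) :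
    rk P C B + rk P (C ∪ B) A ≤ rk P C (A ∪ B) := by
  obtain ⟨SB, hSB, hiB, hfB, hcB, hspB⟩ := rk_exists_basis P (C := C) hB
  obtain ⟨SA, hSA, hiA, hfA, hcA, hspA⟩ := rk_exists_basis P (C := C ∪ B) hA
  have hdisj : Disjoint SB SA := by
    rw [Set.disjoint_left]
    intro x hxB hxA
    apply hiA x hxA
    exact P.subset_cl _ (Or.inl (Or.inr (hSB hxB)))
  have hind : clIndep P.cl C (SB ∪ SA) := by
    intro u hu hm
    rcases hu with huB | huA
    · have huA' : u ∉ SA := fun h => (Set.disjoint_left.mp hdisj huB) h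
      have hmem : u ∈ P.cl ((C ∪ (SB \ {u})) ∪ SA) := by
        refine P.mono _ _ ?_ hm
        intro z hz
        rcases hz with hz | hz
        · exact Or.inl (Or.inl hz)
        · rcases hz.1 with hzB | hzA
          · exact Or.inl (Or.inr ⟨hzB, hz.2⟩)
          · exact Or.inr hzA
      have hnm : u ∉ P.cl (C ∪ (SB \ {u})) := hiB u huB
      obtain ⟨t, htA, ht⟩ := exists_exchange P hfA hmem hnm
      apply hiA t htA
      refine P.mono _ _ ?_ ht
      apply union_subset
      · apply union_subset
        · apply union_subset
          · exact fun z hz => Or.inl (Or.inl hz)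
          · exact fun z hz => Or.inl (Or.inr (hSB hz.1))
        · exact fun z hz => Or.inr hz
      · intro z hz
        rcases hz with rfl
        exact Or.inl (Or.inr (hSB huB))
    · apply hiA u huA
      refine P.mono _ _ ?_ hm
      intro z hz
      rcases hz with hz | hz
      · exact Or.inl (Or.inl hz)
      · rcases hz.1 with hzB | hzA
        · exact Or.inl (Or.inr (hSB hzB))
        · exact Or.inr ⟨hzA, hz.2⟩
  have hsub : SB ∪ SA ⊆ A ∪ B := union_subset (hSB.trans subset_union_right)
    (hSA.trans subset_union_left)
  have hcard : (SB ∪ SA).ncard = SB.ncard + SA.ncard :=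
    ncard_union_eq hdisj hfB hfA
  have := le_rk P (hA.union hB) hsub hind
  rw [hcard, hcB, hcA] at this
  exact this

lemma rk_union_eq (C A B : Set X) (hA : A.Finite) (hB : B.Finite) :
    rk P C (A ∪ B) = rk P C B + rk P (C ∪ B) A :=
  le_antisymm (rk_union_le P C A B hA hB) (rk_le_union P C A B hA hB)

/-! ### cardinal bridges -/

lemma mk_eq_ncard {Y : Type*} {S : Set Y} (hS : S.Finite) : Cardinal.mk S = S.ncard := by
  have : Fintype S := hS.fintype
  rw [Cardinal.mk_fintype, ← Nat.card_eq_fintype_card, Nat.card_coe_set_eq]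

instance clRank_nonempty (A C : Set X) : Nonempty {S : Set X // S ⊆ A ∧ clIndep P.cl C S} :=
  ⟨⟨∅, empty_subset _, clIndep_empty P C⟩⟩

lemma le_clRank {A C S : Set X} (hS : S ⊆ A) (hi : clIndep P.cl C S) :
    Cardinal.mk S ≤ clRank P.cl A C := by
  have := Cardinal.bddAbove_range
    (fun S : {S : Set X // S ⊆ A ∧ clIndep P.cl C S} => Cardinal.mk S.1)
  exact le_ciSup this ⟨S, hS, hi⟩

lemma clRank_le_of_bound {A C : Set X} (K : ℕ)
    (h : ∀ S, S ⊆ A → clIndep P.cl C S → S.Finite ∧ S.ncard ≤ K) :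
    clRank P.cl A C ≤ (K : Cardinal) := by
  have : Nonempty {S : Set X // S ⊆ A ∧ clIndep P.cl C S} := clRank_nonempty P A C
  apply ciSup_le
  rintro ⟨S, hS, hi⟩
  obtain ⟨hfin, hle⟩ := h S hS hi
  rw [mk_eq_ncard hfin]
  exact_mod_cast hle

lemma clRank_anti_base {A C C' : Set X} (h : C ⊆ C') :
    clRank P.cl A C' ≤ clRank P.cl A C := by
  have : Nonempty {S : Set X // S ⊆ A ∧ clIndep P.cl C' S} := clRank_nonempty P A C'
  apply ciSup_le
  rintro ⟨S, hS, hi⟩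
  exact le_clRank P hS (clIndep_mono_base P hi h)

lemma clRank_lt_aleph0_of_subset_cl {A C W : Set X} (hW : W.Finite)
    (h : A ⊆ P.cl (C ∪ W)) : clRank P.cl A C < Cardinal.aleph0 := by
  refine lt_of_le_of_lt (clRank_le_of_bound P W.ncard ?_) (Cardinal.nat_lt_aleph0 _)
  intro S hS hi
  exact steinitz' P hW hi (hS.trans h)

lemma finite_bound_of_subsets {S : Set X} (K : ℕ)
    (h : ∀ T, T ⊆ S → T.Finite → T.ncard ≤ K) : S.Finite ∧ S.ncard ≤ K := by
  by_cases hS : S.Finite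
  · exact ⟨hS, h S Subset.rfl hS⟩
  · have hinf : S.Infinite := hS
    obtain ⟨T, hTS, hTfin, hT⟩ := hinf.exists_subset_ncard_eq (K + 1)
    have := h T hTS hTfin
    omega

/-! ### jets -/

variable (δ : X → X)

lemma mem_Jle {A : Set X} {n : ℕ} {x : X} :
    x ∈ Jle δ A n ↔ ∃ a ∈ A, ∃ i ≤ n, δ^[i] a = x := by
  simp [Jle]

lemma mem_Jlt {A : Set X} {n : ℕ} {x : X} :
    x ∈ Jlt δ A n ↔ ∃ a ∈ A, ∃ i < n, δ^[i] a = x := by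
  simp [Jlt]

lemma mem_Jinf {A : Set X} {x : X} :
    x ∈ Jinf δ A ↔ ∃ a ∈ A, ∃ i, δ^[i] a = x := by
  simp [Jinf]

lemma Jle_zero (A : Set X) : Jle δ A 0 = A := by
  ext x
  rw [mem_Jle]
  constructor
  · rintro ⟨a, ha, i, hi, rfl⟩
    interval_cases i
    simpa using ha
  · intro hx
    exact ⟨x, hx, 0, le_refl 0, rfl⟩

lemma Jlt_zero (A : Set X) : Jlt δ A 0 = ∅ := by
  ext x
  rw [mem_Jlt]
  simp

lemma Jlt_succ (A : Set X) (n : ℕ) : Jlt δ A (n + 1) = Jle δ A n := by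
  ext x
  rw [mem_Jlt, mem_Jle]
  simp [Nat.lt_succ_iff]

lemma Jle_succ (A : Set X) (n : ℕ) :
    Jle δ A (n + 1) = (δ^[n+1]) '' A ∪ Jle δ A n := by
  ext x
  rw [mem_Jle]
  constructor
  · rintro ⟨a, ha, i, hi, rfl⟩
    rcases Nat.lt_or_ge i (n+1) with h | h
    · exact Or.inr ((mem_Jle δ).mpr ⟨a, ha, i, Nat.lt_succ_iff.mp h, rfl⟩)
    · have : i = n + 1 := le_antisymm hi h
      subst this
      exact Or.inl ⟨a, ha, rfl⟩
  · rintro (⟨a, ha, rfl⟩ | hx)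
    · exact ⟨a, ha, n+1, le_refl _, rfl⟩
    · obtain ⟨a, ha, i, hi, rfl⟩ := (mem_Jle δ).mp hx
      exact ⟨a, ha, i, hi.trans (Nat.le_succ n), rfl⟩

lemma Jle_mono_n {A : Set X} {m n : ℕ} (h : m ≤ n) : Jle δ A m ⊆ Jle δ A n := by
  intro x hx
  obtain ⟨a, ha, i, hi, rfl⟩ := (mem_Jle δ).mp hx
  exact (mem_Jle δ).mpr ⟨a, ha, i, hi.trans h, rfl⟩

lemma Jle_mono_set {A B : Set X} (h : A ⊆ B) (n : ℕ) : Jle δ A n ⊆ Jle δ B n := by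
  intro x hx
  obtain ⟨a, ha, i, hi, rfl⟩ := (mem_Jle δ).mp hx
  exact (mem_Jle δ).mpr ⟨a, h ha, i, hi, rfl⟩

lemma Jle_union (A B : Set X) (n : ℕ) :
    Jle δ (A ∪ B) n = Jle δ A n ∪ Jle δ B n := by
  ext x
  simp only [mem_union, mem_Jle]
  constructor
  · rintro ⟨a, (ha | ha), i, hi, rfl⟩
    · exact Or.inl ⟨a, ha, i, hi, rfl⟩
    · exact Or.inr ⟨a, ha, i, hi, rfl⟩
  · rintro (⟨a, ha, i, hi, rfl⟩ | ⟨a, ha, i, hi, rfl⟩)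
    · exact ⟨a, Or.inl ha, i, hi, rfl⟩
    · exact ⟨a, Or.inr ha, i, hi, rfl⟩

lemma Jle_finite {A : Set X} (hA : A.Finite) (n : ℕ) : (Jle δ A n).Finite := by
  apply hA.biUnion
  intro a _
  exact (Set.finite_Iic n).image _

lemma Jle_subset_Jinf (A : Set X) (n : ℕ) : Jle δ A n ⊆ Jinf δ A := by
  intro x hx
  obtain ⟨a, ha, i, _, rfl⟩ := (mem_Jle δ).mp hx
  exact (mem_Jinf δ).mpr ⟨a, ha, i, rfl⟩

lemma Jinf_mono {A B : Set X} (h : A ⊆ B) : Jinf δ A ⊆ Jinf δ B := by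
  intro x hx
  obtain ⟨a, ha, i, rfl⟩ := (mem_Jinf δ).mp hx
  exact (mem_Jinf δ).mpr ⟨a, h ha, i, rfl⟩

lemma subset_Jinf (A : Set X) : A ⊆ Jinf δ A := fun a ha =>
  (mem_Jinf δ).mpr ⟨a, ha, 0, rfl⟩

lemma Jinf_union (A B : Set X) : Jinf δ (A ∪ B) = Jinf δ A ∪ Jinf δ B := by
  ext x
  simp only [mem_union, mem_Jinf]
  constructor
  · rintro ⟨a, (ha | ha), i, rfl⟩
    · exact Or.inl ⟨a, ha, i, rfl⟩
    · exact Or.inr ⟨a, ha, i, rfl⟩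
  · rintro (⟨a, ha, i, rfl⟩ | ⟨a, ha, i, rfl⟩)
    · exact ⟨a, Or.inl ha, i, rfl⟩
    · exact ⟨a, Or.inr ha, i, rfl⟩

lemma Jinf_inv (A : Set X) : δ '' Jinf δ A ⊆ Jinf δ A := by
  rintro x ⟨y, hy, rfl⟩
  obtain ⟨a, ha, i, rfl⟩ := (mem_Jinf δ).mp hy
  refine (mem_Jinf δ).mpr ⟨a, ha, i + 1, ?_⟩
  rw [Function.iterate_succ_apply']

lemma Jinf_biUnion (A : Set X) : Jinf δ A = ⋃ a ∈ A, Jinf δ {a} := by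
  ext x
  constructor
  · intro hx
    obtain ⟨a, ha, i, rfl⟩ := (mem_Jinf δ).mp hx
    exact mem_biUnion ha ((mem_Jinf δ).mpr ⟨a, rfl, i, rfl⟩)
  · intro hx
    obtain ⟨a, ha, hxa⟩ := mem_iUnion₂.mp hx
    obtain ⟨b, rfl, i, rfl⟩ := (mem_Jinf δ).mp hxa
    exact (mem_Jinf δ).mpr ⟨b, ha, i, rfl⟩

lemma finite_subset_Jle_singleton {b : X} {G : Set X} (hG : G.Finite)
    (h : G ⊆ Jinf δ {b}) : ∃ M, G ⊆ Jle δ {b} M := by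
  have hch : ∀ g : G, ∃ m, (g : X) ∈ Jle δ {b} m := by
    rintro ⟨g, hg⟩
    obtain ⟨a, rfl, i, rfl⟩ := (mem_Jinf δ).mp (h hg)
    exact ⟨i, (mem_Jle δ).mpr ⟨a, rfl, i, le_refl _, rfl⟩⟩
  choose f hf using hch
  have : Finite G := hG.to_subtype
  rcases isEmpty_or_nonempty G with hem | hne
  · refine ⟨0, ?_⟩
    intro g hg
    exact absurd (⟨⟨g, hg⟩⟩ : Nonempty G) (not_nonempty_iff.mpr hem)
  · obtain ⟨M, hM⟩ := Finite.exists_max f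
    refine ⟨f M, ?_⟩
    intro g hg
    exact Jle_mono_n δ (hM ⟨g, hg⟩) (hf ⟨g, hg⟩)

lemma finite_subset_Jinf_finite {B G : Set X} (hG : G.Finite) (h : G ⊆ Jinf δ B) :
    ∃ F, F ⊆ B ∧ F.Finite ∧ G ⊆ Jinf δ F := by
  have hch : ∀ g : G, ∃ b, b ∈ B ∧ (g : X) ∈ Jinf δ {b} := by
    rintro ⟨g, hg⟩
    obtain ⟨a, ha, i, rfl⟩ := (mem_Jinf δ).mp (h hg)
    exact ⟨a, ha, (mem_Jinf δ).mpr ⟨a, rfl, i, rfl⟩⟩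
  choose f hfB hfJ using hch
  have : Finite G := hG.to_subtype
  refine ⟨Set.range f, ?_, Set.finite_range f, ?_⟩
  · rintro b ⟨g, rfl⟩; exact hfB g
  · intro g hg
    refine Jinf_mono δ ?_ (hfJ ⟨g, hg⟩)
    intro z hz
    rcases hz with rfl
    exact ⟨⟨g, hg⟩, rfl⟩

lemma ncard_Jle_singleton_le (a : X) (n : ℕ) : (Jle δ {a} n).ncard ≤ n + 1 := by
  have h1 : Jle δ {a} n = (fun i : ℕ => δ^[i] a) '' {i | i ≤ n} := by
    ext x
    rw [mem_Jle]
    simp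
  rw [h1]
  have h2 : ({i : ℕ | i ≤ n}).ncard = n + 1 := by
    have : {i : ℕ | i ≤ n} = ↑(Finset.Iic n) := by ext i; simp
    rw [this, ncard_coe_finset, Nat.card_Iic]
  calc ((fun i : ℕ => δ^[i] a) '' {i | i ≤ n}).ncard ≤ ({i : ℕ | i ≤ n}).ncard :=
        ncard_image_le (Set.finite_Iic n)
    _ = n + 1 := h2

/-! ### increments -/

noncomputable def inc (C F : Set X) (n : ℕ) : ℕ :=
  rk P (C ∪ Jlt δ F n) ((δ^[n]) '' F)

lemma inc_zero (C F : Set X) : inc P δ C F 0 = rk P C F := by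
  simp only [inc, Jlt_zero, union_empty, Function.iterate_zero, image_id]

lemma inc_succ_eq (C F : Set X) (n : ℕ) :
    inc P δ C F (n + 1) = rk P (C ∪ Jle δ F n) ((δ^[n+1]) '' F) := by
  unfold inc
  rw [Jlt_succ]

variable {δ} in
lemma inc_succ_le (hδ : IsQuasiEndo P δ) {C F : Set X} (hC : δ '' C ⊆ C) (hF : F.Finite)
    (n : ℕ) : inc P δ C F (n + 1) ≤ inc P δ C F n := by
  set A := (δ^[n]) '' F with hAdef
  set B := C ∪ Jlt δ F n with hBdef
  have hAfin : A.Finite := hF.image _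
  have himg : δ '' A = (δ^[n+1]) '' F := by
    rw [hAdef, ← Set.image_comp, ← Function.iterate_succ']
  have hsub : A ∪ B ∪ δ '' B ⊆ C ∪ Jlt δ F (n + 1) := by
    apply union_subset
    · apply union_subset
      · rintro x ⟨f, hf, rfl⟩
        exact Or.inr ((mem_Jlt δ).mpr ⟨f, hf, n, Nat.lt_succ_self n, rfl⟩)
      · apply union_subset
        · exact subset_union_left
        · intro x hx
          obtain ⟨f, hf, i, hi, rfl⟩ := (mem_Jlt δ).mp hx
          exact Or.inr ((mem_Jlt δ).mpr ⟨f, hf, i, by omega, rfl⟩)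
    · rw [hBdef, image_union]
      apply union_subset
      · exact hC.trans subset_union_left
      · rintro x ⟨y, hy, rfl⟩
        obtain ⟨f, hf, i, hi, rfl⟩ := (mem_Jlt δ).mp hy
        refine Or.inr ((mem_Jlt δ).mpr ⟨f, hf, i + 1, by omega, ?_⟩)
        rw [Function.iterate_succ_apply']
  have h4 : (rk P (A ∪ B ∪ δ '' B) ((δ^[n+1]) '' F) : Cardinal) ≤
      clRank P.cl ((δ^[n+1]) '' F) (A ∪ B ∪ δ '' B) := by
    obtain ⟨S, hSs, hSi, hSf, hSc, _⟩ :=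
      rk_exists_basis P (C := A ∪ B ∪ δ '' B) (hF.image (δ^[n+1]))
    rw [← hSc, ← mk_eq_ncard hSf]
    exact le_clRank P hSs hSi
  have h5 : clRank P.cl ((δ^[n+1]) '' F) (A ∪ B ∪ δ '' B) ≤ clRank P.cl A B := by
    rw [← himg]
    exact hδ A B
  have h6 : clRank P.cl A B ≤ (rk P B A : Cardinal) :=
    clRank_le_of_bound P _ (fun S hS hi => ⟨hAfin.subset hS, le_rk P hAfin hS hi⟩)
  have h3 : rk P (C ∪ Jlt δ F (n+1)) ((δ^[n+1]) '' F) ≤ rk P (A ∪ B ∪ δ '' B) ((δ^[n+1]) '' F) :=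
    rk_anti_base P hsub (hF.image _)
  have hchain : (rk P (C ∪ Jlt δ F (n+1)) ((δ^[n+1]) '' F) : Cardinal) ≤ (rk P B A : Cardinal) :=
    le_trans (by exact_mod_cast h3) (le_trans h4 (le_trans h5 h6))
  have := Nat.cast_le.mp hchain
  unfold inc
  exact this

variable {δ} in
lemma inc_antitone (hδ : IsQuasiEndo P δ) {C F : Set X} (hC : δ '' C ⊆ C) (hF : F.Finite) :
    Antitone (inc P δ C F) :=
  antitone_nat_of_succ_le (inc_succ_le P hδ hC hF)

lemma rk_Jle_zero (C F : Set X) : rk P C (Jle δ F 0) = inc P δ C F 0 := by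
  rw [Jle_zero, inc_zero]

lemma rk_Jle_succ {F : Set X} (C : Set X) (hF : F.Finite) (n : ℕ) :
    rk P C (Jle δ F (n + 1)) = rk P C (Jle δ F n) + inc P δ C F (n + 1) := by
  rw [Jle_succ, rk_union_eq P C ((δ^[n+1]) '' F) (Jle δ F n) (hF.image _) (Jle_finite δ hF n),
    inc_succ_eq]

lemma inc_singleton_le_one (C : Set X) (a : X) (n : ℕ) : inc P δ C {a} n ≤ 1 := by
  unfold inc
  rw [image_singleton]
  exact (rk_le_ncard P (finite_singleton _)).trans (by rw [ncard_singleton])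

lemma inc_succ_singleton_eq_zero_iff {C : Set X} {a : X} {n : ℕ} :
    inc P δ C {a} (n + 1) = 0 ↔ δ^[n+1] a ∈ P.cl (C ∪ Jle δ {a} n) := by
  rw [inc_succ_eq, image_singleton, rk_singleton_eq_zero_iff]

variable {δ} in
lemma propagate (hδ : IsQuasiEndo P δ) {C : Set X} (hC : δ '' C ⊆ C) {a : X} {n : ℕ}
    (h : δ^[n+1] a ∈ P.cl (C ∪ Jle δ {a} n)) :
    Jinf δ {a} ⊆ P.cl (C ∪ Jle δ {a} n) := by
  have key : ∀ k, δ^[k] a ∈ P.cl (C ∪ Jle δ {a} n) := by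
    intro k
    induction k using Nat.strong_induction_on with
    | _ k ih =>
      rcases Nat.lt_or_ge k (n+1) with hk | hk
      · exact P.subset_cl _ (Or.inr ((mem_Jle δ).mpr ⟨a, rfl, k, Nat.lt_succ_iff.mp hk, rfl⟩))
      · obtain ⟨m, rfl⟩ : ∃ m, k = m + 1 := ⟨k - 1, by omega⟩
        have h0 : inc P δ C {a} (n+1) = 0 := (inc_succ_singleton_eq_zero_iff P δ).mpr h
        have hm : inc P δ C {a} (m+1) = 0 := by
          have := inc_antitone P hδ hC (finite_singleton a) (show n+1 ≤ m+1 by omega)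
          omega
        have hmem : δ^[m+1] a ∈ P.cl (C ∪ Jle δ {a} m) :=
          (inc_succ_singleton_eq_zero_iff P δ).mp hm
        have hsub : C ∪ Jle δ {a} m ⊆ P.cl (C ∪ Jle δ {a} n) := by
          apply union_subset
          · exact fun z hz => P.subset_cl _ (Or.inl hz)
          · intro z hz
            obtain ⟨c, rfl, i, hi, rfl⟩ := (mem_Jle δ).mp hz
            exact ih i (by omega)
        have h2 := P.mono _ _ hsub hmem
        rwa [P.cl_cl] at h2
  intro z hz
  obtain ⟨c, rfl, i, rfl⟩ := (mem_Jinf δ).mp hz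
  exact key i

variable {δ} in
lemma mem_clDelta_iff (hδ : IsQuasiEndo P δ) {B : Set X} {a : X} :
    a ∈ clDelta P δ B ↔ ∃ n, δ^[n+1] a ∈ P.cl (Jinf δ B ∪ Jle δ {a} n) := by
  constructor
  · intro h
    have h' : clRank P.cl (Jinf δ {a}) (Jinf δ B) < Cardinal.aleph0 := h
    by_contra hno
    push_neg at hno
    set C := Jinf δ B with hCdef
    have hC : δ '' C ⊆ C := Jinf_inv δ B
    have h1 : ∀ n, 1 ≤ inc P δ C {a} (n+1) := by
      intro n
      rcases Nat.eq_zero_or_pos (inc P δ C {a} (n+1)) with h0 | hp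
      · exact absurd ((inc_succ_singleton_eq_zero_iff P δ).mp h0) (hno n)
      · exact hp
    have h2 : ∀ n, n + 1 ≤ rk P C (Jle δ {a} n) := by
      intro n
      induction n with
      | zero =>
        rw [rk_Jle_zero]
        have ha1 := inc_succ_le P hδ hC (finite_singleton a) 0
        have ha2 := h1 0
        omega
      | succ n ihn =>
        rw [rk_Jle_succ P δ C (finite_singleton a) n]
        have := h1 n
        omega
    have h3 : ∀ n : ℕ, (n : Cardinal) ≤ clRank P.cl (Jinf δ {a}) C := by
      intro n
      obtain ⟨S, hSs, hSi, hSf, hSc, _⟩ :=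
        rk_exists_basis P (C := C) (Jle_finite δ (finite_singleton a) n)
      have hn1 : n ≤ S.ncard := by
        have := h2 n
        omega
      calc (n : Cardinal) ≤ (S.ncard : Cardinal) := by exact_mod_cast hn1
        _ = Cardinal.mk S := (mk_eq_ncard hSf).symm
        _ ≤ clRank P.cl (Jinf δ {a}) C := le_clRank P (hSs.trans (Jle_subset_Jinf δ _ n)) hSi
    exact absurd h' (not_lt.mpr (Cardinal.aleph0_le.mpr h3))
  · rintro ⟨n, hn⟩
    have hsub := propagate P hδ (Jinf_inv δ B) hn
    exact clRank_lt_aleph0_of_subset_cl P (Jle_finite δ (finite_singleton a) n) hsub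

variable {δ} in
lemma mem_clDelta_finitary (hδ : IsQuasiEndo P δ) {B : Set X} {a : X}
    (h : a ∈ clDelta P δ B) :
    ∃ F : Set X, F ⊆ B ∧ F.Finite ∧ a ∈ clDelta P δ F := by
  obtain ⟨n, hn⟩ := (mem_clDelta_iff P hδ).mp h
  obtain ⟨G, hG, hmem⟩ := P.finitary _ _ hn
  obtain ⟨F, hFB, hFfin, hGF⟩ := finite_subset_Jinf_finite δ
    ((G.finite_toSet).subset inter_subset_left)
    (inter_subset_right : ↑G ∩ Jinf δ B ⊆ Jinf δ B)
  refine ⟨F, hFB, hFfin, (mem_clDelta_iff P hδ).mpr ⟨n, ?_⟩⟩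
  refine P.mono _ _ ?_ hmem
  intro z hz
  by_cases hzB : z ∈ Jinf δ B
  · exact Or.inl (hGF ⟨hz, hzB⟩)
  · rcases hG hz with hzb | hza
    · exact absurd hzb hzB
    · exact Or.inr hza

/-! ### the delta-closure axioms -/

lemma clDelta_subset (B : Set X) : B ⊆ clDelta P δ B := by
  intro a ha
  show clRank P.cl (Jinf δ {a}) (Jinf δ B) < Cardinal.aleph0
  refine clRank_lt_aleph0_of_subset_cl P finite_empty (W := ∅) ?_
  rw [union_empty]
  exact (Jinf_mono δ (singleton_subset_iff.mpr ha)).trans (P.subset_cl _)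

lemma clDelta_mono {A B : Set X} (h : A ⊆ B) : clDelta P δ A ⊆ clDelta P δ B := by
  intro a ha
  have ha' : clRank P.cl (Jinf δ {a}) (Jinf δ A) < Cardinal.aleph0 := ha
  exact lt_of_le_of_lt (clRank_anti_base P (Jinf_mono δ h)) ha'

variable {δ} in
lemma clDelta_idem (hδ : IsQuasiEndo P δ) (B : Set X) :
    clDelta P δ (clDelta P δ B) = clDelta P δ B := by
  apply subset_antisymm _ (clDelta_subset P δ (clDelta P δ B))
  intro a ha
  obtain ⟨F, hFsub, hFfin, haF⟩ := mem_clDelta_finitary P hδ ha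
  have hch : ∀ c : F, ∃ n : ℕ, Jinf δ {(c : X)} ⊆ P.cl (Jinf δ B ∪ Jle δ {(c : X)} n) := by
    rintro ⟨c, hc⟩
    obtain ⟨n, hn⟩ := (mem_clDelta_iff P hδ).mp (hFsub hc)
    exact ⟨n, propagate P hδ (Jinf_inv δ B) hn⟩
  choose nf hnf using hch
  have hFt : Finite F := hFfin.to_subtype
  set W : Set X := ⋃ c : F, Jle δ {(c : X)} (nf c) with hWdef
  have hWfin : W.Finite := Set.finite_iUnion (fun c => Jle_finite δ (finite_singleton _) _)
  have hJF : Jinf δ F ⊆ P.cl (Jinf δ B ∪ W) := by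
    rw [Jinf_biUnion]
    intro z hz
    obtain ⟨c, hc, hzc⟩ := mem_iUnion₂.mp hz
    refine P.mono _ _ ?_ (hnf ⟨c, hc⟩ hzc)
    apply union_subset_union_right
    exact subset_iUnion_of_subset ⟨c, hc⟩ Subset.rfl
  obtain ⟨m, hm⟩ := (mem_clDelta_iff P hδ).mp haF
  have hJa : Jinf δ {a} ⊆ P.cl (Jinf δ F ∪ Jle δ {a} m) :=
    propagate P hδ (Jinf_inv δ F) hm
  have hfinal : Jinf δ {a} ⊆ P.cl (Jinf δ B ∪ (W ∪ Jle δ {a} m)) := by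
    refine hJa.trans ?_
    have h1 : Jinf δ F ∪ Jle δ {a} m ⊆ P.cl (Jinf δ B ∪ (W ∪ Jle δ {a} m)) := by
      apply union_subset
      · refine hJF.trans (P.mono _ _ ?_)
        intro z hz
        rcases hz with hz | hz
        · exact Or.inl hz
        · exact Or.inr (Or.inl hz)
      · exact fun z hz => P.subset_cl _ (Or.inr (Or.inr hz))
    have := P.mono _ _ h1
    rwa [P.cl_cl] at this
  exact clRank_lt_aleph0_of_subset_cl P
    (hWfin.union (Jle_finite δ (finite_singleton a) m)) hfinal

variable {δ} in
lemma clDelta_exchange (hδ : IsQuasiEndo P δ) (a b : X) (A : Set X)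
    (h1 : a ∈ clDelta P δ (A ∪ {b})) (h2 : a ∉ clDelta P δ A) :
    b ∈ clDelta P δ (A ∪ {a}) := by
  classical
  set C := Jinf δ A with hCdef
  have hC : δ '' C ⊆ C := Jinf_inv δ A
  have hfa : ({a} : Set X).Finite := finite_singleton a
  have hfb : ({b} : Set X).Finite := finite_singleton b
  have hfab : ({a, b} : Set X).Finite := (finite_singleton b).insert a
  have hab : ({a, b} : Set X) = {a} ∪ {b} := by
    rw [insert_eq]
  -- increments of a over C are identically 1
  have hainc : ∀ n, inc P δ C {a} n = 1 := by
    have hne : ∀ n, inc P δ C {a} (n+1) ≠ 0 := by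
      intro n h0
      exact h2 ((mem_clDelta_iff P hδ).mpr ⟨n, (inc_succ_singleton_eq_zero_iff P δ).mp h0⟩)
    intro n
    have hub : inc P δ C {a} n ≤ 1 := inc_singleton_le_one P δ C a n
    have h3 := inc_antitone P hδ hC hfa (show n ≤ n + 1 by omega)
    have h4 := hne n
    omega
  have hα : ∀ n, rk P C (Jle δ {a} n) = n + 1 := by
    intro n
    induction n with
    | zero => rw [rk_Jle_zero, hainc 0]
    | succ n ih => rw [rk_Jle_succ P δ C hfa n, ih, hainc (n+1)]
  -- eventually-constant increment of the pair
  obtain ⟨N, hN⟩ : ∃ N, inc P δ C {a, b} N = sInf (Set.range (inc P δ C {a, b})) := by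
    obtain ⟨N, hN⟩ := Nat.sInf_mem (Set.range_nonempty (inc P δ C {a, b}))
    exact ⟨N, hN⟩
  have hconst : ∀ n, N ≤ n → inc P δ C {a, b} n = inc P δ C {a, b} N := by
    intro n hn
    have h4 : inc P δ C {a, b} n ≤ inc P δ C {a, b} N := inc_antitone P hδ hC hfab hn
    have h5 : inc P δ C {a, b} N ≤ inc P δ C {a, b} n := by
      rw [hN]
      exact Nat.sInf_le ⟨n, rfl⟩
    omega
  -- data from h1
  have hCb : δ '' (C ∪ Jinf δ {b}) ⊆ C ∪ Jinf δ {b} := by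
    rw [image_union]
    exact union_subset (hC.trans subset_union_left)
      ((Jinf_inv δ {b}).trans subset_union_right)
  obtain ⟨n₀, hn₀⟩ := (mem_clDelta_iff P hδ).mp h1
  rw [Jinf_union] at hn₀
  have hJa : Jinf δ {a} ⊆ P.cl ((C ∪ Jinf δ {b}) ∪ Jle δ {a} n₀) :=
    propagate P hδ hCb hn₀
  -- rule out e ≥ 2
  have he2 : inc P δ C {a, b} N ≤ 1 := by
    by_contra hgt
    push_neg at hgt
    have hall2 : ∀ n, inc P δ C {a, b} n = 2 := by
      intro n
      have hub : inc P δ C {a, b} n ≤ 2 := by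
        have hstep := inc_antitone P hδ hC hfab (Nat.zero_le n)
        have hz : inc P δ C {a, b} 0 ≤ 2 := by
          rw [inc_zero]
          refine (rk_le_ncard P hfab).trans ?_
          calc ({a, b} : Set X).ncard ≤ ({b} : Set X).ncard + 1 := ncard_insert_le a {b}
            _ = 2 := by rw [ncard_singleton]
        omega
      have h6 := inc_antitone P hδ hC hfab (le_max_left n N)
      have h7 := hconst (max n N) (le_max_right n N)
      omega
    have hγ : ∀ n, rk P C (Jle δ {a, b} n) = 2 * n + 2 := by
      intro n
      induction n with
      | zero => rw [rk_Jle_zero, inc_zero]; have := hall2 0; rw [inc_zero] at this; omega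
      | succ n ih => rw [rk_Jle_succ P δ C hfab n, ih, hall2 (n+1)]; ring
    have hindep : ∀ n, n + 1 ≤ (Jle δ {a} n).ncard ∧
        clIndep P.cl (C ∪ Jle δ {b} n) (Jle δ {a} n) := by
      intro n
      have hsplit : rk P C (Jle δ {a, b} n) ≤
          rk P C (Jle δ {b} n) + rk P (C ∪ Jle δ {b} n) (Jle δ {a} n) := by
        have h8 := rk_union_le P C (Jle δ {a} n) (Jle δ {b} n)
          (Jle_finite δ hfa n) (Jle_finite δ hfb n)
        have h9 : Jle δ {a, b} n = Jle δ {a} n ∪ Jle δ {b} n := by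
          rw [hab, Jle_union]
        rw [h9]
        exact h8
      have hβn : rk P C (Jle δ {b} n) ≤ n + 1 :=
        (rk_le_ncard P (Jle_finite δ hfb n)).trans (ncard_Jle_singleton_le δ b n)
      have hd : n + 1 ≤ rk P (C ∪ Jle δ {b} n) (Jle δ {a} n) := by
        have := hγ n
        omega
      obtain ⟨S, hSs, hSi, hSf, hSc, _⟩ :=
        rk_exists_basis P (C := C ∪ Jle δ {b} n) (Jle_finite δ hfa n)
      have hSn : n + 1 ≤ S.ncard := by omega
      have hcard_le : (Jle δ {a} n).ncard ≤ n + 1 := ncard_Jle_singleton_le δ a n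
      have hge : n + 1 ≤ (Jle δ {a} n).ncard := by
        have := ncard_le_ncard hSs (Jle_finite δ hfa n)
        omega
      have hSdef : S = Jle δ {a} n :=
        eq_of_subset_of_ncard_le hSs (by omega) (Jle_finite δ hfa n)
      exact ⟨hge, hSdef ▸ hSi⟩
    -- contradiction at n := n₀ + 1
    set n := n₀ + 1 with hndef
    have hxw : ∀ x : (Jle δ {a} n : Set X), ∃ m,
        (x : X) ∈ P.cl ((C ∪ Jle δ {b} m) ∪ Jle δ {a} n₀) := by
      rintro ⟨x, hx⟩
      have hx1 : x ∈ P.cl ((C ∪ Jinf δ {b}) ∪ Jle δ {a} n₀) :=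
        hJa (Jle_subset_Jinf δ {a} n hx)
      obtain ⟨G, hG, hmem⟩ := P.finitary _ _ hx1
      obtain ⟨m, hm⟩ := finite_subset_Jle_singleton δ
        ((G.finite_toSet).subset inter_subset_left)
        (inter_subset_right : ↑G ∩ Jinf δ {b} ⊆ Jinf δ {b})
      refine ⟨m, P.mono _ _ ?_ hmem⟩
      intro z hz
      by_cases hzb : z ∈ Jinf δ {b}
      · exact Or.inl (Or.inr (hm ⟨hz, hzb⟩))
      · rcases hG hz with (hzC | hzb') | hza
        · exact Or.inl (Or.inl hzC)
        · exact absurd hzb' hzb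
        · exact Or.inr hza
    have hJfin : Finite (Jle δ {a} n : Set X) := (Jle_finite δ hfa n).to_subtype
    have hane : Nonempty (Jle δ {a} n : Set X) :=
      ⟨⟨a, (mem_Jle δ).mpr ⟨a, rfl, 0, Nat.zero_le n, rfl⟩⟩⟩
    choose f hf using hxw
    obtain ⟨x₀, hx₀⟩ := Finite.exists_max f
    set M := max (f x₀) n with hMdef
    have hMspan : Jle δ {a} n ⊆ P.cl ((C ∪ Jle δ {b} M) ∪ Jle δ {a} n₀) := by
      intro x hx
      refine P.mono _ _ ?_ (hf ⟨x, hx⟩)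
      apply union_subset_union_left
      apply union_subset_union_right
      exact Jle_mono_n δ ((hx₀ ⟨x, hx⟩).trans (le_max_left _ _))
    have hMind : clIndep P.cl (C ∪ Jle δ {b} M) (Jle δ {a} n) :=
      clIndep_subset P (hindep M).2 (Jle_mono_n δ (le_max_right (f x₀) n))
    have hst := steinitz' P (Jle_finite δ hfa n₀) hMind hMspan
    have h7 := (hindep n).1
    have h8 := ncard_Jle_singleton_le δ a n₀
    omega
  -- rule out e = 0, and get the linear bound
  have hγge : ∀ n, n + 1 ≤ rk P C (Jle δ {a, b} n) := by
    intro n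
    calc n + 1 = rk P C (Jle δ {a} n) := (hα n).symm
      _ ≤ rk P C (Jle δ {a, b} n) := by
        refine rk_mono P (Jle_finite δ hfab n) (Jle_mono_set δ ?_ n)
        intro z hz
        rcases hz with rfl
        exact Or.inl rfl
  have hγlin : ∀ n, N ≤ n → rk P C (Jle δ {a, b} n) + N ≤ rk P C (Jle δ {a, b} N) + n := by
    intro n hn
    induction n, hn using Nat.le_induction with
    | base => omega
    | succ n hn ih =>
      rw [rk_Jle_succ P δ C hfab n]
      have h9 := hconst (n+1) (by omega)
      omega
  set K := rk P C (Jle δ {a, b} N) + N + 1 with hKdef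
  have hβ' : ∀ n, rk P (C ∪ Jle δ {a} n) (Jle δ {b} n) ≤ K := by
    intro n
    rcases Nat.lt_or_ge n N with hn | hn
    · calc rk P (C ∪ Jle δ {a} n) (Jle δ {b} n) ≤ (Jle δ {b} n).ncard :=
            rk_le_ncard P (Jle_finite δ hfb n)
        _ ≤ n + 1 := ncard_Jle_singleton_le δ b n
        _ ≤ K := by omega
    · have hle := rk_le_union P C (Jle δ {b} n) (Jle δ {a} n)
        (Jle_finite δ hfb n) (Jle_finite δ hfa n)
      have hU : Jle δ {b} n ∪ Jle δ {a} n = Jle δ ({a, b} : Set X) n := by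
        rw [hab, Jle_union, union_comm]
      rw [hU, hα n] at hle
      have h10 := hγlin n hn
      omega
  -- conclude
  show clRank P.cl (Jinf δ {b}) (Jinf δ (A ∪ {a})) < Cardinal.aleph0
  have hbound : clRank P.cl (Jinf δ {b}) (Jinf δ (A ∪ {a})) ≤ (K : Cardinal) := by
    rw [Jinf_union]
    apply clRank_le_of_bound P K
    intro S hS hi
    apply finite_bound_of_subsets
    intro T hTS hTfin
    obtain ⟨n', hn'⟩ := finite_subset_Jle_singleton δ hTfin (hTS.trans hS)
    have hT1 : clIndep P.cl (C ∪ Jinf δ {a}) T := clIndep_subset P hi hTS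
    have hT2 : clIndep P.cl (C ∪ Jle δ {a} n') T :=
      clIndep_mono_base P hT1 (union_subset_union_right _ (Jle_subset_Jinf δ {a} n'))
    exact (le_rk P (Jle_finite δ hfb n') hn' hT2).trans (hβ' n')
  exact lt_of_le_of_lt hbound (Cardinal.nat_lt_aleph0 K)

end ClD

/-- If `δ` is a quasi-endomorphism of a finitary matroid `(X, cl)`, then the
`δ`-closure `cl^δ` is again a finitary matroid on `X`. -/
theorem clDelta_is_pregeometry {X : Type*} (P : Pregeometry X) (δ : X → X)
    (hδ : IsQuasiEndo P δ) :
    ∃ Q : Pregeometry X, Q.cl = clDelta P δ := by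
  refine ⟨⟨clDelta P δ, ?_, ?_, ?_, ?_, ?_⟩, rfl⟩
  · exact fun A => ClD.clDelta_subset P δ A
  · exact fun A B h => ClD.clDelta_mono P δ h
  · exact fun A => ClD.clDelta_idem P hδ A
  · intro A a ha
    obtain ⟨F, hFB, hFfin, haF⟩ := ClD.mem_clDelta_finitary P hδ ha
    refine ⟨hFfin.toFinset, ?_, ?_⟩
    · rwa [Set.Finite.coe_toFinset]
    · rwa [Set.Finite.coe_toFinset]
  · exact fun a b A => ClD.clDelta_exchange P hδ a b A
end

section
/- Let (X, cl) be a finitary matroid with rank rk, δ : X → X a quasi-endomorphism, a ∈ X and B ⊆ X. Then the following are equivalent: (1) rk(J^∞(a) | J^∞(B)) is finite; (2) there exists n with rk(J^n(a) | J^∞(B)) ≤ n; (3) there exists n with δⁿa ∈ cl(J^{n−1}(a) ∪ J^∞(B)). -/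
section Aux

open Cardinal

variable {X : Type*}

lemma clIndep.mono_set {cl : Set X → Set X} (hm : ∀ A B : Set X, A ⊆ B → cl A ⊆ cl B)
    {B S S' : Set X} (h : clIndep cl B S) (hs : S' ⊆ S) : clIndep cl B S' := by
  intro s hsS' hmem
  exact h s (hs hsS')
    (hm _ _ (Set.union_subset_union_right _ (Set.diff_subset_diff_left hs)) hmem)

lemma clRank_le {cl : Set X → Set X} {A B : Set X} {c : Cardinal}
    (h : ∀ S : Set X, S ⊆ A → clIndep cl B S → Cardinal.mk S ≤ c) :
    clRank cl A B ≤ c :=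
  ciSup_le' fun S => h S.1 S.2.1 S.2.2

lemma le_clRank {cl : Set X → Set X} {A B S : Set X} (hS : S ⊆ A) (hI : clIndep cl B S) :
    Cardinal.mk S ≤ clRank cl A B :=
  le_ciSup (f := fun S : {S : Set X // S ⊆ A ∧ clIndep cl B S} => Cardinal.mk S.1)
    ⟨Cardinal.mk X, by rintro c ⟨S, rfl⟩; exact Cardinal.mk_set_le _⟩ ⟨S, hS, hI⟩

lemma clRank_le_zero_of_subset_cl (P : Pregeometry X) {A B : Set X} (h : A ⊆ P.cl B) :
    clRank P.cl A B ≤ 0 := by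
  refine clRank_le fun S hS hI => ?_
  have hSe : S = ∅ := by
    by_contra hne
    obtain ⟨s, hs⟩ := Set.nonempty_iff_ne_empty.2 hne
    exact hI s hs (P.mono B (B ∪ (S \ {s})) Set.subset_union_left (h (hS hs)))
  simp [hSe]

lemma mem_cl_of_clRank_singleton_le_zero (P : Pregeometry X) {x : X} {B : Set X}
    (h : clRank P.cl {x} B ≤ 0) : x ∈ P.cl B := by
  by_contra hx
  have hI : clIndep P.cl B {x} := by
    intro s hs
    rw [Set.mem_singleton_iff] at hs; subst hs
    simpa using hx
  have h1 := le_clRank (le_refl ({x} : Set X)) hI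
  rw [Cardinal.mk_singleton] at h1
  exact absurd (h1.trans h) (by simp)

/-- Finite Steinitz exchange: an independent set inside the closure of `C ∪ T` with `T`
finite of size `≤ n` has cardinality at most `n`. -/
lemma steinitz (P : Pregeometry X) :
    ∀ (n : ℕ) (C : Set X) (T : Finset X) (S : Set X), T.card ≤ n →
      clIndep P.cl C S → S ⊆ P.cl (C ∪ ↑T) → Cardinal.mk S ≤ (n : Cardinal) := by
  classical
  intro n
  induction n with
  | zero =>
    intro C T S hT hI hsub
    have hT0 : T = ∅ := Finset.card_eq_zero.mp (Nat.le_zero.mp hT)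
    subst hT0
    have hSe : S = ∅ := by
      by_contra hne
      obtain ⟨s, hs⟩ := Set.nonempty_iff_ne_empty.2 hne
      have : s ∈ P.cl C := by simpa using hsub hs
      exact hI s hs (P.mono C (C ∪ (S \ {s})) Set.subset_union_left this)
    simp [hSe]
  | succ n ih =>
    intro C T S hT hI hsub
    rcases Set.eq_empty_or_nonempty S with rfl | ⟨s, hs⟩
    · simp
    -- choose minimal T' ⊆ T with s ∈ cl (C ∪ T')
    have hsnotC : ∀ U : Set X, U ⊆ C ∪ (S \ {s}) → s ∉ P.cl U := by
      intro U hU hmem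
      exact hI s hs (P.mono _ _ hU hmem)
    obtain ⟨T', hT'mem, hT'min⟩ := Finset.exists_min_image
      ((T.powerset).filter (fun U : Finset X => s ∈ P.cl (C ∪ ↑U))) (fun U : Finset X => U.card)
      ⟨T, by simp [Finset.mem_filter, Finset.mem_powerset]; exact hsub hs⟩
    rw [Finset.mem_filter, Finset.mem_powerset] at hT'mem
    obtain ⟨hT'sub, hT'cl⟩ := hT'mem
    have hT'ne : T'.Nonempty := by
      rcases Finset.eq_empty_or_nonempty T' with rfl | h
      · exact absurd (by simpa using hT'cl) (hsnotC C Set.subset_union_left)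
      · exact h
    obtain ⟨t, ht⟩ := hT'ne
    have hst : s ∉ P.cl (C ∪ ↑(T'.erase t)) := by
      intro hmem
      have hm : T'.erase t ∈ (T.powerset).filter (fun U : Finset X => s ∈ P.cl (C ∪ ↑U)) := by
        rw [Finset.mem_filter, Finset.mem_powerset]
        exact ⟨(Finset.erase_subset t T').trans hT'sub, hmem⟩
      have := hT'min _ hm
      exact absurd this (not_le.mpr (Finset.card_erase_lt_of_mem ht))
    have hTT : (C ∪ (↑T' : Set X)) = (C ∪ ↑(T'.erase t)) ∪ {t} := by
      ext x
      simp only [Finset.coe_erase, Set.mem_union, Set.mem_diff, Set.mem_singleton_iff,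
        Finset.mem_coe]
      constructor
      · rintro (hx | hx)
        · exact Or.inl (Or.inl hx)
        · by_cases hxt : x = t
          · exact Or.inr hxt
          · exact Or.inl (Or.inr ⟨hx, hxt⟩)
      · rintro ((hx | ⟨hx, _⟩) | rfl)
        · exact Or.inl hx
        · exact Or.inr hx
        · exact Or.inr ht
    have hexch := P.exchange s t (C ∪ ↑(T'.erase t)) (by rw [← hTT]; exact hT'cl) hst
    -- hexch : t ∈ cl ((C ∪ ↑(T'.erase t)) ∪ {s})
    -- apply IH to C ∪ {s}, T.erase t, S \ {s}
    have hcard : (T.erase t).card ≤ n := by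
      have := Finset.card_erase_of_mem (hT'sub ht)
      omega
    have hI' : clIndep P.cl (C ∪ {s}) (S \ {s}) := by
      intro u hu hmem
      have hid : (C ∪ {s}) ∪ ((S \ {s}) \ {u}) = C ∪ (S \ {u}) := by
        ext x
        simp only [Set.mem_union, Set.mem_diff, Set.mem_singleton_iff]
        constructor
        · rintro ((hx | rfl) | ⟨⟨hx, _⟩, hxu⟩)
          · exact Or.inl hx
          · exact Or.inr ⟨hs, fun h => hu.2 h.symm⟩
          · exact Or.inr ⟨hx, hxu⟩
        · rintro (hx | ⟨hx, hxu⟩)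
          · exact Or.inl (Or.inl hx)
          · by_cases hxs : x = s
            · exact Or.inl (Or.inr hxs)
            · exact Or.inr ⟨⟨hx, hxs⟩, hxu⟩
      rw [hid] at hmem
      exact hI u hu.1 hmem
    have hspan : ((C ∪ {s}) ∪ (↑(T.erase t) : Set X)) ⊇ C := Set.subset_union_left.trans
      Set.subset_union_left
    have hTsub : (↑T : Set X) ⊆ P.cl ((C ∪ {s}) ∪ ↑(T.erase t)) := by
      intro x hx
      by_cases hxt : x = t
      · subst hxt
        refine P.mono _ _ ?_ hexch
        rintro y ((hy | hy) | rfl)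
        · exact Or.inl (Or.inl hy)
        · refine Or.inr ?_
          rw [Finset.coe_erase] at hy ⊢
          exact ⟨hT'sub hy.1, hy.2⟩
        · exact Or.inl (Or.inr rfl)
      · exact P.subset_cl _ (Or.inr (by
          rw [Finset.mem_coe] at hx ⊢
          exact Finset.mem_erase.mpr ⟨hxt, hx⟩))
    have hCT : C ∪ (↑T : Set X) ⊆ P.cl ((C ∪ {s}) ∪ ↑(T.erase t)) := by
      refine Set.union_subset ?_ hTsub
      exact fun x hx => P.subset_cl _ (hspan hx)
    have hsub' : S \ {s} ⊆ P.cl ((C ∪ {s}) ∪ ↑(T.erase t)) := by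
      intro u hu
      have h1 := hsub hu.1
      have h2 : P.cl (C ∪ ↑T) ⊆ P.cl ((C ∪ {s}) ∪ ↑(T.erase t)) := by
        have := P.mono _ _ hCT
        rwa [P.cl_cl] at this
      exact h2 h1
    have hfin := ih (C ∪ {s}) (T.erase t) (S \ {s}) hcard hI' hsub'
    have hSins : S = insert s (S \ {s}) := by
      rw [Set.insert_diff_singleton, Set.insert_eq_self.mpr hs]
    calc Cardinal.mk S = Cardinal.mk ↥(insert s (S \ {s})) := by rw [← hSins]
      _ = Cardinal.mk ↥(S \ {s}) + 1 := Cardinal.mk_insert (by simp)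
      _ ≤ (n : Cardinal) + 1 := by gcongr
      _ = ((n + 1 : ℕ) : Cardinal) := by push_cast; ring

/-- If `δᵐ a` is never in the closure of the earlier jet together with `C`, then no `δⁱ a`
is in the closure of `C` together with other iterates. -/
lemma key_not_mem (P : Pregeometry X) (δ : X → X) (a : X) (C : Set X)
    (hyp : ∀ m : ℕ, δ^[m] a ∉ P.cl (C ∪ (fun j : ℕ => δ^[j] a) '' {j | j < m})) :
    ∀ (n : ℕ) (F : Finset ℕ), (∀ j ∈ F, j < n) → ∀ i ∉ F,
      δ^[i] a ∉ P.cl (C ∪ (fun j : ℕ => δ^[j] a) '' ↑F) := by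
  classical
  intro n
  induction n with
  | zero =>
    intro F hF i _ hmem
    have hF0 : F = ∅ := Finset.eq_empty_of_forall_notMem fun j hj =>
      absurd (hF j hj) (Nat.not_lt_zero j)
    subst hF0
    refine hyp i (P.mono _ _ ?_ hmem)
    simp
  | succ n ihn =>
    intro F hF i hiF hmem
    by_cases hnF : n ∈ F
    · have hF'lt : ∀ j ∈ F.erase n, j < n := fun j hj =>
        lt_of_le_of_ne (Nat.lt_succ_iff.mp (hF j (Finset.mem_of_mem_erase hj)))
          (Finset.ne_of_mem_erase hj)
      rcases lt_trichotomy i n with hin | rfl | hni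
      · by_cases hmem' : δ^[i] a ∈ P.cl (C ∪ (fun j : ℕ => δ^[j] a) '' ↑(F.erase n))
        · exact ihn (F.erase n) hF'lt i (fun h => hiF (Finset.mem_of_mem_erase h)) hmem'
        · have hsplit : C ∪ (fun j : ℕ => δ^[j] a) '' ↑F
              = (C ∪ (fun j : ℕ => δ^[j] a) '' ↑(F.erase n)) ∪ {δ^[n] a} := by
            conv_lhs => rw [← Finset.insert_erase hnF]
            rw [Finset.coe_insert, Set.image_insert_eq]
            ext x
            simp only [Set.mem_union, Set.mem_insert_iff, Set.mem_singleton_iff]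
            tauto
          rw [hsplit] at hmem
          have hx := P.exchange (δ^[i] a) (δ^[n] a) _ hmem hmem'
          refine hyp n (P.mono _ _ ?_ hx)
          rintro x (hx' | rfl)
          · rcases hx' with hc | ⟨j, hj, rfl⟩
            · exact Or.inl hc
            · exact Or.inr ⟨j, hF'lt j hj, rfl⟩
          · exact Or.inr ⟨i, hin, rfl⟩
      · exact hiF hnF
      · refine hyp i (P.mono _ _ ?_ hmem)
        refine Set.union_subset_union_right _ ?_
        rintro x ⟨j, hj, rfl⟩
        exact ⟨j, by simp only [Set.mem_setOf_eq]; have := hF j hj; omega, rfl⟩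
    · refine ihn F (fun j hj => lt_of_le_of_ne (Nat.lt_succ_iff.mp (hF j hj))
        (by rintro rfl; exact hnF hj)) i hiF hmem

lemma key_not_mem' (P : Pregeometry X) (δ : X → X) (a : X) (C : Set X)
    (hyp : ∀ m : ℕ, δ^[m] a ∉ P.cl (C ∪ (fun j : ℕ => δ^[j] a) '' {j | j < m}))
    (F : Finset ℕ) (i : ℕ) (hi : i ∉ F) :
    δ^[i] a ∉ P.cl (C ∪ (fun j : ℕ => δ^[j] a) '' ↑F) :=
  key_not_mem P δ a C hyp (F.sup id + 1) F
    (fun j hj => Nat.lt_succ_of_le (Finset.le_sup (f := id) hj)) i hi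

lemma exists_finset_of_mem_cl (P : Pregeometry X) (C : Set X) (f : ℕ → X) (U : Set ℕ) (x : X)
    (hx : x ∈ P.cl (C ∪ f '' U)) :
    ∃ F : Finset ℕ, ↑F ⊆ U ∧ x ∈ P.cl (C ∪ f '' ↑F) := by
  classical
  obtain ⟨G, hG, hxG⟩ := P.finitary _ x hx
  have hch : ∀ g : X, ∃ j : ℕ, g ∈ (↑G : Set X) → g ∉ C → (j ∈ U ∧ f j = g) := by
    intro g
    by_cases hg : g ∈ (↑G : Set X) ∧ g ∉ C
    · rcases hG hg.1 with hc | ⟨j, hj, hfj⟩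
      · exact absurd hc hg.2
      · exact ⟨j, fun _ _ => ⟨hj, hfj⟩⟩
    · exact ⟨0, fun h1 h2 => absurd ⟨h1, h2⟩ hg⟩
  choose φ hφ using hch
  refine ⟨(G.filter (fun g => g ∉ C)).image φ, ?_, ?_⟩
  · intro j hj
    simp only [Finset.coe_image, Set.mem_image, Finset.mem_coe, Finset.mem_filter] at hj
    obtain ⟨g, ⟨hgG, hgC⟩, rfl⟩ := hj
    exact (hφ g hgG hgC).1
  · refine P.mono _ _ ?_ hxG
    intro g hg
    by_cases hgC : g ∈ C
    · exact Or.inl hgC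
    · refine Or.inr ⟨φ g, ?_, (hφ g hg hgC).2⟩
      simp only [Finset.coe_image, Set.mem_image, Finset.mem_coe, Finset.mem_filter]
      exact ⟨g, ⟨hg, hgC⟩, rfl⟩

lemma jet_injective (P : Pregeometry X) (δ : X → X) (a : X) (C : Set X)
    (hyp : ∀ m : ℕ, δ^[m] a ∉ P.cl (C ∪ (fun j : ℕ => δ^[j] a) '' {j | j < m})) :
    Function.Injective (fun i : ℕ => δ^[i] a) := by
  have key : ∀ i j : ℕ, i < j → δ^[i] a ≠ δ^[j] a := by
    intro i j hij heq
    refine hyp j (P.subset_cl _ ?_)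
    exact Or.inr ⟨i, hij, heq⟩
  intro i j hij
  rcases lt_trichotomy i j with h | h | h
  · exact absurd hij (key i j h)
  · exact h
  · exact absurd hij.symm (key j i h)

lemma jet_indep (P : Pregeometry X) (δ : X → X) (a : X) (C : Set X)
    (hyp : ∀ m : ℕ, δ^[m] a ∉ P.cl (C ∪ (fun j : ℕ => δ^[j] a) '' {j | j < m})) :
    clIndep P.cl C (Set.range fun i : ℕ => δ^[i] a) := by
  intro s hsmem hs
  obtain ⟨i, rfl⟩ := hsmem
  have hsub : Set.range (fun i : ℕ => δ^[i] a) \ {δ^[i] a}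
      ⊆ (fun j : ℕ => δ^[j] a) '' {j | j ≠ i} := by
    rintro x ⟨⟨j, rfl⟩, hne⟩
    exact ⟨j, by rintro rfl; exact hne rfl, rfl⟩
  have hs' : δ^[i] a ∈ P.cl (C ∪ (fun j : ℕ => δ^[j] a) '' {j | j ≠ i}) :=
    P.mono _ _ (Set.union_subset_union_right _ hsub) hs
  obtain ⟨F, hFU, hFmem⟩ := exists_finset_of_mem_cl P C _ _ _ hs'
  exact key_not_mem' P δ a C hyp F i (fun h => hFU h rfl) hFmem

lemma jlt_singleton (δ : X → X) (a : X) (n : ℕ) :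
    Jlt δ {a} n = (fun i : ℕ => δ^[i] a) '' {i | i < n} := by
  simp [Jlt]

lemma jle_singleton (δ : X → X) (a : X) (n : ℕ) :
    Jle δ {a} n = (fun i : ℕ => δ^[i] a) '' {i | i ≤ n} := by
  simp [Jle]

lemma jinf_singleton (δ : X → X) (a : X) :
    Jinf δ {a} = Set.range (fun i : ℕ => δ^[i] a) := by
  simp [Jinf]

/-- With `hδ`, condition (3) implies the whole forward orbit lies in `cl (Jlt ∪ Jinf B)`. -/
lemma orbit_subset_cl (P : Pregeometry X) (δ : X → X) (hδ : IsQuasiEndo P δ) (a : X) (B : Set X)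
    (n : ℕ) (h3 : δ^[n] a ∈ P.cl (Jlt δ {a} n ∪ Jinf δ B)) :
    ∀ m : ℕ, δ^[m] a ∈ P.cl (Jlt δ {a} n ∪ Jinf δ B) := by
  set E := Jlt δ {a} n ∪ Jinf δ B with hE
  intro m
  induction m using Nat.strong_induction_on with
  | _ m ih =>
    rcases lt_trichotomy m n with hm | rfl | hm
    · refine P.subset_cl _ (Or.inl ?_)
      rw [jlt_singleton]
      exact ⟨m, hm, rfl⟩
    · exact h3
    · obtain ⟨k, rfl⟩ : ∃ k, m = k + 1 := ⟨m - 1, by omega⟩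
      have hk : δ^[k] a ∈ P.cl E := ih k (by omega)
      have h0 : clRank P.cl {δ^[k] a} E ≤ 0 :=
        clRank_le_zero_of_subset_cl P (by simpa using hk)
      have h1 := hδ {δ^[k] a} E
      rw [Set.image_singleton] at h1
      have h2 : clRank P.cl {δ^[k + 1] a} ({δ^[k] a} ∪ E ∪ δ '' E) ≤ 0 := by
        rw [Function.iterate_succ_apply']
        exact h1.trans h0
      have hmem := mem_cl_of_clRank_singleton_le_zero P h2
      have hsub : ({δ^[k] a} ∪ E ∪ δ '' E : Set X) ⊆ P.cl E := by
        rintro x ((rfl | hx) | ⟨y, hy, rfl⟩)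
        · exact hk
        · exact P.subset_cl _ hx
        · rcases hy with hy | hy
          · rw [jlt_singleton] at hy
            obtain ⟨j, hj, rfl⟩ := hy
            have h5 : δ ((fun i : ℕ => δ^[i] a) j) = δ^[j + 1] a :=
              (Function.iterate_succ_apply' δ j a).symm
            rw [h5]
            exact ih (j + 1) (by simp only [Set.mem_setOf_eq] at hj; omega)
          · refine P.subset_cl _ (Or.inr ?_)
            simp only [Jinf, Set.mem_iUnion] at hy ⊢
            obtain ⟨b, hb, j, rfl⟩ := hy
            exact ⟨b, hb, j + 1, Function.iterate_succ_apply' δ j b⟩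
      have := P.mono _ _ hsub
      rw [P.cl_cl] at this
      exact this hmem

end Aux

/-- For a quasi-endomorphism `δ` of a finitary matroid, the following are equivalent:
(1) `rk(J^∞(a) | J^∞(B))` is finite;
(2) there is `n` with `rk(Jⁿ(a) | J^∞(B)) ≤ n`;
(3) there is `n` with `δⁿ a ∈ cl(J^{n-1}(a) ∪ J^∞(B))`. -/
theorem clDelta_mem_tfae {X : Type*} (P : Pregeometry X) (δ : X → X)
    (hδ : IsQuasiEndo P δ) (a : X) (B : Set X) :
    (clRank P.cl (Jinf δ {a}) (Jinf δ B) < Cardinal.aleph0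
      ↔ ∃ n : ℕ, clRank P.cl (Jle δ {a} n) (Jinf δ B) ≤ (n : Cardinal)) ∧
    ((∃ n : ℕ, clRank P.cl (Jle δ {a} n) (Jinf δ B) ≤ (n : Cardinal))
      ↔ ∃ n : ℕ, δ^[n] a ∈ P.cl (Jlt δ {a} n ∪ Jinf δ B)) := by
  classical
  have hTcoe : ∀ n : ℕ, (↑((Finset.range n).image (fun i : ℕ => δ^[i] a)) : Set X)
      = Jlt δ {a} n := by
    intro n
    rw [jlt_singleton]
    ext x
    simp only [Finset.coe_image, Finset.coe_range, Set.mem_image, Set.mem_Iio,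
      Set.mem_setOf_eq]
  have hTcard : ∀ n : ℕ, ((Finset.range n).image (fun i : ℕ => δ^[i] a)).card ≤ n :=
    fun n => (Finset.card_image_le).trans_eq (Finset.card_range n)
  -- (3) → (1)
  have e31 : (∃ n : ℕ, δ^[n] a ∈ P.cl (Jlt δ {a} n ∪ Jinf δ B)) →
      clRank P.cl (Jinf δ {a}) (Jinf δ B) < Cardinal.aleph0 := by
    rintro ⟨n, h3⟩
    have horb := orbit_subset_cl P δ hδ a B n h3
    have hbound : clRank P.cl (Jinf δ {a}) (Jinf δ B) ≤ (n : Cardinal) := by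
      refine clRank_le fun S hS hI =>
        steinitz P n (Jinf δ B) ((Finset.range n).image (fun i : ℕ => δ^[i] a)) S
          (hTcard n) hI ?_
      intro x hx
      have hx' := hS hx
      rw [jinf_singleton] at hx'
      obtain ⟨m, rfl⟩ := hx'
      rw [hTcoe n, Set.union_comm]
      exact horb m
    exact lt_of_le_of_lt hbound (Cardinal.nat_lt_aleph0 n)
  -- (1) → (3)
  have e13 : clRank P.cl (Jinf δ {a}) (Jinf δ B) < Cardinal.aleph0 →
      ∃ n : ℕ, δ^[n] a ∈ P.cl (Jlt δ {a} n ∪ Jinf δ B) := by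
    intro h1
    by_contra hno
    push_neg at hno
    have hyp : ∀ m : ℕ, δ^[m] a ∉ P.cl (Jinf δ B ∪ (fun j : ℕ => δ^[j] a) '' {j | j < m}) :=
      fun m hm => hno m (by rwa [Set.union_comm, ← jlt_singleton] at hm)
    have hinj := jet_injective P δ a _ hyp
    have hindep := jet_indep P δ a _ hyp
    have hge : Cardinal.aleph0 ≤ clRank P.cl (Jinf δ {a}) (Jinf δ B) := by
      have hsub : Set.range (fun i : ℕ => δ^[i] a) ⊆ Jinf δ {a} := by
        rw [jinf_singleton]
      refine le_trans ?_ (le_clRank hsub hindep)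
      haveI : Infinite ↥(Set.range fun i : ℕ => δ^[i] a) :=
        (Set.infinite_range_of_injective hinj).to_subtype
      exact Cardinal.aleph0_le_mk _
    exact absurd h1 (not_lt.mpr hge)
  -- (3) → (2)
  have e32 : (∃ n : ℕ, δ^[n] a ∈ P.cl (Jlt δ {a} n ∪ Jinf δ B)) →
      ∃ n : ℕ, clRank P.cl (Jle δ {a} n) (Jinf δ B) ≤ (n : Cardinal) := by
    rintro ⟨n, h3⟩
    refine ⟨n, clRank_le fun S hS hI =>
      steinitz P n (Jinf δ B) ((Finset.range n).image (fun i : ℕ => δ^[i] a)) S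
        (hTcard n) hI ?_⟩
    intro x hx
    have hx' := hS hx
    rw [jle_singleton] at hx'
    obtain ⟨i, hi, rfl⟩ := hx'
    have hi' : i ≤ n := hi
    rcases lt_or_eq_of_le hi' with hlt | rfl
    · refine P.subset_cl _ (Or.inr ?_)
      rw [hTcoe n, jlt_singleton]
      exact ⟨i, hlt, rfl⟩
    · rw [hTcoe i, Set.union_comm]
      exact h3
  -- (2) → (3)
  have e23 : (∃ n : ℕ, clRank P.cl (Jle δ {a} n) (Jinf δ B) ≤ (n : Cardinal)) →
      ∃ n : ℕ, δ^[n] a ∈ P.cl (Jlt δ {a} n ∪ Jinf δ B) := by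
    rintro ⟨n, hn⟩
    by_contra hno
    push_neg at hno
    have hyp : ∀ m : ℕ, δ^[m] a ∉ P.cl (Jinf δ B ∪ (fun j : ℕ => δ^[j] a) '' {j | j < m}) :=
      fun m hm => hno m (by rwa [Set.union_comm, ← jlt_singleton] at hm)
    have hinj := jet_injective P δ a _ hyp
    have hindep := jet_indep P δ a _ hyp
    set S : Set X := ↑((Finset.range (n + 1)).image (fun i : ℕ => δ^[i] a)) with hSdef
    have hSsub : S ⊆ Jle δ {a} n := by
      intro x hx
      simp only [hSdef, Finset.coe_image, Finset.coe_range, Set.mem_image, Set.mem_Iio] at hx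
      obtain ⟨i, hi, rfl⟩ := hx
      rw [jle_singleton]
      exact ⟨i, by simp only [Set.mem_setOf_eq]; omega, rfl⟩
    have hSrange : S ⊆ Set.range (fun i : ℕ => δ^[i] a) := by
      intro x hx
      simp only [hSdef, Finset.coe_image, Finset.coe_range, Set.mem_image, Set.mem_Iio] at hx
      obtain ⟨i, _, rfl⟩ := hx
      exact ⟨i, rfl⟩
    have hSindep := clIndep.mono_set P.mono hindep hSrange
    have hcard : Cardinal.mk S = ((n + 1 : ℕ) : Cardinal) := by
      have h1 : Cardinal.mk S
          = (((Finset.range (n + 1)).image (fun i : ℕ => δ^[i] a)).card : Cardinal) := by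
        rw [hSdef]; exact Cardinal.mk_coe_finset
      rw [h1, Finset.card_image_of_injective _ hinj, Finset.card_range]
    have hle := le_clRank hSsub hSindep
    rw [hcard] at hle
    have := Nat.cast_le.mp (hle.trans hn)
    omega
  exact ⟨⟨fun h1 => e32 (e13 h1), fun h2 => e31 (e23 h2)⟩, e23, e32⟩
end

section
/- Let (X, cl) be a finitary matroid with rank rk, δ a quasi-endomorphism, A ⊆ X a finite set and B ⊆ X with δB ⊆ B. Then the sequence n ↦ rk(δⁿA | J^{n−1}(A) ∪ B) is non-increasing, hence eventually constant, and rk^δ(A | B) = lim_{k→∞} rk(δᵏA | J^{k−1}(A) ∪ B), where rk^δ is the rank function of the matroid (X, cl^δ). -/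
namespace QE
open Set

variable {X : Type*} (P : Pregeometry X)

lemma cl_subset_cl_of_subset_cl {A B : Set X} (h : A ⊆ P.cl B) : P.cl A ⊆ P.cl B := by
  calc P.cl A ⊆ P.cl (P.cl B) := P.mono _ _ h
  _ = P.cl B := P.cl_cl _

lemma cl_union_cl_left (B T : Set X) : P.cl (P.cl B ∪ T) = P.cl (B ∪ T) := by
  apply subset_antisymm
  · apply cl_subset_cl_of_subset_cl
    apply Set.union_subset
    · exact P.mono _ _ Set.subset_union_left
    · exact Set.subset_union_right.trans (P.subset_cl _)
  · exact P.mono _ _ (Set.union_subset_union_left T (P.subset_cl B))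

lemma cl_union_of_subset_cl {C D : Set X} (h : C ⊆ P.cl D) : P.cl (D ∪ C) = P.cl D := by
  apply subset_antisymm
  · apply cl_subset_cl_of_subset_cl
    exact Set.union_subset (P.subset_cl _) h
  · exact P.mono _ _ Set.subset_union_left

lemma indep_subset {B S S' : Set X} (hsub : S' ⊆ S) (h : clIndep P.cl B S) :
    clIndep P.cl B S' := by
  intro s hs hcon
  exact h s (hsub hs) (P.mono _ _ (Set.union_subset_union_right B (Set.diff_subset_diff_left hsub)) hcon)

lemma indep_mono_base {B B' S : Set X} (hsub : B ⊆ B') (h : clIndep P.cl B' S) :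
    clIndep P.cl B S := by
  intro s hs hcon
  exact h s hs (P.mono _ _ (Set.union_subset_union_left _ hsub) hcon)

lemma indep_insert {B S : Set X} (h : clIndep P.cl B S) {a : X} (ha : a ∉ P.cl (B ∪ S)) :
    clIndep P.cl B (insert a S) := by
  have haS : a ∉ S := fun hmem => ha (P.subset_cl _ (Set.mem_union_right _ hmem))
  intro s hs
  rcases Set.mem_insert_iff.mp hs with rfl | hsS
  · have : insert s S \ {s} = S := by
      rw [Set.insert_diff_of_mem _ (Set.mem_singleton s), Set.diff_singleton_eq_self haS]
    rw [this]; exact ha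
  · have hne : s ≠ a := fun h' => haS (h' ▸ hsS)
    intro hcon
    have hrw : insert a S \ {s} = insert a (S \ {s}) := by
      rw [Set.insert_diff_of_notMem _ (by simpa using hne.symm)]
    rw [hrw] at hcon
    have hcon' : s ∈ P.cl ((B ∪ (S \ {s})) ∪ {a}) := by
      have heq : B ∪ insert a (S \ {s}) = (B ∪ (S \ {s})) ∪ {a} := by
        rw [Set.union_singleton, ← Set.union_insert]
      rwa [heq] at hcon
    have h2 := P.exchange s a _ hcon' (h s hsS)
    apply ha
    have hsub : (B ∪ S \ {s}) ∪ {s} ⊆ B ∪ S := by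
      apply Set.union_subset (Set.union_subset_union_right B Set.diff_subset)
      intro x hx; rcases hx with rfl; exact Set.mem_union_right _ hsS
    exact P.mono _ _ hsub h2

lemma exists_minimal_spanning {B : Set X} {x : X} (T : Set X) (hT : T.Finite)
    (hx : x ∈ P.cl (B ∪ T)) :
    ∃ T', T' ⊆ T ∧ x ∈ P.cl (B ∪ T') ∧ ∀ t ∈ T', x ∉ P.cl (B ∪ (T' \ {t})) := by
  obtain ⟨n, hn⟩ : ∃ n, T.ncard = n := ⟨_, rfl⟩
  induction n using Nat.strong_induction_on generalizing T with
  | _ n ih =>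
    by_cases h : ∃ t ∈ T, x ∈ P.cl (B ∪ (T \ {t}))
    · obtain ⟨t, ht, hxt⟩ := h
      obtain ⟨T', hsub, h1, h2⟩ := ih ((T \ {t}).ncard)
        (hn ▸ Set.ncard_diff_singleton_lt_of_mem ht hT) _ (hT.diff) hxt rfl
      exact ⟨T', hsub.trans Set.diff_subset, h1, h2⟩
    · push_neg at h
      exact ⟨T, subset_rfl, hx, h⟩

lemma steinitz_aux {B : Set X} : ∀ (k : ℕ) (S T : Set X), S.Finite → T.Finite →
    (S \ T).ncard = k → clIndep P.cl B S → S ⊆ P.cl (B ∪ T) → S.ncard ≤ T.ncard := by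
  intro k
  induction k using Nat.strong_induction_on with
  | _ k ih =>
    intro S T hS hT hcard hind hspan
    rcases Nat.eq_zero_or_pos k with hk | hk
    · have hsub : S ⊆ T := by
        rw [hk] at hcard
        have h0 := (Set.ncard_eq_zero (hS.diff)).mp hcard
        rwa [Set.diff_eq_empty] at h0
      exact Set.ncard_le_ncard hsub hT
    · have hne : (S \ T).Nonempty := by
        rw [← Set.ncard_pos (hS.diff)]; omega
      obtain ⟨s, hsS, hsT⟩ := hne
      obtain ⟨T', hT'sub, hxT', hmin⟩ := exists_minimal_spanning P T hT (hspan hsS)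
      obtain ⟨t, htT', htS⟩ : ∃ t ∈ T', t ∉ S \ {s} := by
        by_contra hc; push_neg at hc
        exact hind s hsS (P.mono _ _ (Set.union_subset_union_right B hc) hxT')
      have hts : t ≠ s := fun h => hsT (hT'sub (h ▸ htT'))
      have htS' : t ∉ S := fun h => htS ⟨h, hts⟩
      have h1 : s ∈ P.cl ((B ∪ (T' \ {t})) ∪ {t}) := by
        have heq : (B ∪ (T' \ {t})) ∪ {t} = B ∪ T' := by
          rw [Set.union_assoc, Set.diff_union_of_subset (by simpa using htT')]
        rw [heq]; exact hxT'
      have h3 : t ∈ P.cl ((B ∪ (T' \ {t})) ∪ {s}) := P.exchange s t _ h1 (hmin t htT')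
      set T'' := insert s (T \ {t}) with hT''def
      have hT''fin : T''.Finite := (hT.diff).insert s
      have hBT : B ∪ T ⊆ P.cl (B ∪ T'') := by
        apply Set.union_subset
        · exact (Set.subset_union_left).trans (P.subset_cl _)
        · intro x hxT
          by_cases hxt : x = t
          · subst hxt
            refine P.mono _ _ ?_ h3
            apply Set.union_subset
            · apply Set.union_subset_union_right
              intro y hy
              exact Set.mem_insert_of_mem _ ⟨hT'sub hy.1, hy.2⟩
            · rw [Set.singleton_subset_iff]
              exact Set.mem_union_right _ (Set.mem_insert _ _)
          · apply P.subset_cl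
            exact Set.mem_union_right _ (Set.mem_insert_of_mem _ ⟨hxT, hxt⟩)
      have hspan'' : S ⊆ P.cl (B ∪ T'') :=
        hspan.trans (cl_subset_cl_of_subset_cl P hBT)
      have hdiff : S \ T'' = (S \ T) \ {s} := by
        ext x
        by_cases hxt : x = t
        · subst hxt
          simp only [hT''def, Set.mem_diff, Set.mem_insert_iff, Set.mem_singleton_iff]
          constructor
          · rintro ⟨hx, -⟩; exact absurd hx htS'
          · rintro ⟨⟨hx, -⟩, -⟩; exact absurd hx htS'
        · simp only [hT''def, Set.mem_diff, Set.mem_insert_iff, Set.mem_singleton_iff, hxt]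
          tauto
      have hcard'' : (S \ T'').ncard < k := by
        rw [hdiff, ← hcard]
        exact Set.ncard_diff_singleton_lt_of_mem ⟨hsS, hsT⟩ (hS.diff)
      have hle := ih _ hcard'' S T'' hS hT''fin rfl hind hspan''
      have hsT'' : s ∉ T \ {t} := fun hc => hsT hc.1
      have hTcard : T''.ncard = T.ncard := by
        rw [hT''def, Set.ncard_insert_of_notMem hsT'' (hT.diff),
          Set.ncard_diff_singleton_add_one (hT'sub htT') hT]
      omega

lemma steinitz {B S T : Set X} (hT : T.Finite) (hind : clIndep P.cl B S)
    (hspan : S ⊆ P.cl (B ∪ T)) : S.Finite ∧ S.ncard ≤ T.ncard := by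
  have hfin : S.Finite := by
    by_contra hinf
    have hinf' : S.Infinite := hinf
    obtain ⟨S₀, hsub, hfin₀, hcard₀⟩ := hinf'.exists_subset_ncard_eq (T.ncard + 1)
    have := steinitz_aux P _ S₀ T hfin₀ hT rfl (indep_subset P hsub hind) (hsub.trans hspan)
    omega
  exact ⟨hfin, steinitz_aux P _ S T hfin hT rfl hind hspan⟩

/-- `S` is a basis of `A` over `B`. -/
def IsBasis (B A S : Set X) : Prop :=
  S ⊆ A ∧ clIndep P.cl B S ∧ A ⊆ P.cl (B ∪ S)

lemma exists_finite_basis' (A B : Set X)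
    (hbdd : ∃ d : ℕ, ∀ S, S ⊆ A → clIndep P.cl B S → S.Finite → S.ncard ≤ d) :
    ∃ S, IsBasis P B A S ∧ S.Finite := by
  obtain ⟨d, hd⟩ := hbdd
  set N : Set ℕ := {n | ∃ S, S ⊆ A ∧ clIndep P.cl B S ∧ S.Finite ∧ S.ncard = n} with hN
  have hne : N.Nonempty := ⟨0, ∅, Set.empty_subset _, fun s hs => absurd hs (Set.notMem_empty s),
    Set.finite_empty, Set.ncard_empty _⟩
  have hbd : BddAbove N := by
    refine ⟨d, fun n hn => ?_⟩
    obtain ⟨S, h1, h2, h3, rfl⟩ := hn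
    exact hd S h1 h2 h3
  obtain ⟨S, hsub, hind, hfin, hcard⟩ := Nat.sSup_mem hne hbd
  refine ⟨S, ⟨hsub, hind, ?_⟩, hfin⟩
  intro a ha
  by_contra hacl
  have haS : a ∉ S := fun hmem => hacl (P.subset_cl _ (Set.mem_union_right _ hmem))
  have hmem : S.ncard + 1 ∈ N :=
    ⟨insert a S, Set.insert_subset ha hsub, indep_insert P hind hacl, hfin.insert a,
      by rw [Set.ncard_insert_of_notMem haS hfin]⟩
  have := le_csSup hbd hmem
  omega

lemma exists_finite_basis (A B : Set X) (hA : A.Finite) :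
    ∃ S, IsBasis P B A S ∧ S.Finite :=
  exists_finite_basis' P A B ⟨A.ncard, fun S h1 _ _ => Set.ncard_le_ncard h1 hA⟩

lemma zero_mem_rkset (A B : Set X) :
    0 ∈ {n | ∃ S, S ⊆ A ∧ clIndep P.cl B S ∧ S.Finite ∧ S.ncard = n} :=
  ⟨∅, Set.empty_subset _, fun s hs => absurd hs (Set.notMem_empty s),
    Set.finite_empty, Set.ncard_empty _⟩

/-- The natural-number rank of `A` over `B`. -/
noncomputable def nrk (A B : Set X) : ℕ :=
  sSup {n | ∃ S, S ⊆ A ∧ clIndep P.cl B S ∧ S.Finite ∧ S.ncard = n}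

lemma nrk_eq_of_basis {A B S : Set X} (hS : IsBasis P B A S) (hfin : S.Finite) :
    nrk P A B = S.ncard := by
  apply le_antisymm
  · apply csSup_le ⟨0, zero_mem_rkset P A B⟩
    rintro n ⟨S', h1, h2, h3, rfl⟩
    exact (steinitz P hfin h2 (h1.trans hS.2.2)).2
  · apply le_csSup
    · refine ⟨S.ncard, ?_⟩
      rintro n ⟨S', h1, h2, h3, rfl⟩
      exact (steinitz P hfin h2 (h1.trans hS.2.2)).2
    · exact ⟨S, hS.1, hS.2.1, hfin, rfl⟩

lemma nrk_le_of_span {A B T : Set X} (hT : T.Finite) (hspan : A ⊆ P.cl (B ∪ T)) :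
    nrk P A B ≤ T.ncard := by
  apply csSup_le ⟨0, zero_mem_rkset P A B⟩
  rintro n ⟨S', h1, h2, h3, rfl⟩
  exact (steinitz P hT h2 (h1.trans hspan)).2

lemma indep_ncard_le_nrk {A B S : Set X} (hA : A.Finite) (hsub : S ⊆ A)
    (hind : clIndep P.cl B S) : S.ncard ≤ nrk P A B := by
  obtain ⟨S₀, hS₀, hfin₀⟩ := exists_finite_basis P A B hA
  rw [nrk_eq_of_basis P hS₀ hfin₀]
  exact (steinitz P hfin₀ hind (hsub.trans hS₀.2.2)).2

lemma nrk_le_ncard {A B : Set X} (hA : A.Finite) : nrk P A B ≤ A.ncard :=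
  nrk_le_of_span P hA (Set.subset_union_right.trans (P.subset_cl _))

lemma nrk_mono {A A' B : Set X} (hA : A.Finite) (hA' : A'.Finite) (hsub : A ⊆ A') :
    nrk P A B ≤ nrk P A' B := by
  obtain ⟨S, hS, hfin⟩ := exists_finite_basis P A B hA
  rw [nrk_eq_of_basis P hS hfin]
  exact indep_ncard_le_nrk P hA' (hS.1.trans hsub) hS.2.1

lemma nrk_anti_base {A B B' : Set X} (hA : A.Finite) (hsub : B ⊆ B') :
    nrk P A B' ≤ nrk P A B := by
  obtain ⟨S, hS, hfin⟩ := exists_finite_basis P A B hA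
  rw [nrk_eq_of_basis P hS hfin]
  obtain ⟨S', hS', hfin'⟩ := exists_finite_basis P A B' hA
  rw [nrk_eq_of_basis P hS' hfin']
  have hspan : S' ⊆ P.cl (B' ∪ S) :=
    (hS'.1.trans hS.2.2).trans (P.mono _ _ (Set.union_subset_union_left _ hsub))
  exact (steinitz P hfin hS'.2.1 hspan).2

lemma cl_union_congr {B B' : Set X} (h : P.cl B = P.cl B') (T : Set X) :
    P.cl (B ∪ T) = P.cl (B' ∪ T) := by
  rw [← cl_union_cl_left P B T, h, cl_union_cl_left]

lemma indep_congr_base {B B' S : Set X} (h : P.cl B = P.cl B') :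
    clIndep P.cl B S ↔ clIndep P.cl B' S := by
  unfold clIndep
  constructor <;> intro hi s hs
  · rw [← cl_union_congr P h]; exact hi s hs
  · rw [cl_union_congr P h]; exact hi s hs

lemma nrk_congr_base {A B B' : Set X} (h : P.cl B = P.cl B') :
    nrk P A B = nrk P A B' := by
  unfold nrk
  congr 1
  ext n
  constructor <;> rintro ⟨S, h1, h2, h3, rfl⟩
  · exact ⟨S, h1, (indep_congr_base P h).mp h2, h3, rfl⟩
  · exact ⟨S, h1, (indep_congr_base P h).mpr h2, h3, rfl⟩

lemma nrk_zero_iff {A B : Set X} (hA : A.Finite) : nrk P A B = 0 ↔ A ⊆ P.cl B := by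
  constructor
  · intro h0
    obtain ⟨S, hS, hfin⟩ := exists_finite_basis P A B hA
    rw [nrk_eq_of_basis P hS hfin] at h0
    have hempty : S = ∅ := (Set.ncard_eq_zero hfin).mp h0
    have hsp := hS.2.2
    rwa [hempty, Set.union_empty] at hsp
  · intro h
    refine Nat.le_antisymm ?_ (Nat.zero_le _)
    have hle := nrk_le_of_span P (Set.finite_empty (α := X))
      (show A ⊆ P.cl (B ∪ ∅) by rwa [Set.union_empty])
    simpa using hle

lemma indep_union_of {B A S T : Set X} (hS : clIndep P.cl B S) (hSA : S ⊆ A)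
    (hT : clIndep P.cl (B ∪ A) T) (hTfin : T.Finite) : clIndep P.cl B (S ∪ T) := by
  have hdisj : ∀ t ∈ T, t ∉ S := by
    intro t ht hts
    exact hT t ht (P.subset_cl _ (Set.mem_union_left _ (Set.mem_union_right _ (hSA hts))))
  intro x hx
  rcases hx with hxS | hxT
  · -- x ∈ S
    have hxT : x ∉ T := fun hc => hdisj x hc hxS
    intro hcon
    have heq : (S ∪ T) \ {x} = (S \ {x}) ∪ T := by
      rw [Set.union_diff_distrib, Set.diff_singleton_eq_self hxT]
    rw [heq, ← Set.union_assoc] at hcon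
    obtain ⟨T', hT'sub, hxT', hmin⟩ := exists_minimal_spanning P T hTfin hcon
    rcases Set.eq_empty_or_nonempty T' with rfl | ⟨t, htT'⟩
    · rw [Set.union_empty] at hxT'
      exact hS x hxS hxT'
    · have h1 : x ∈ P.cl (((B ∪ S \ {x}) ∪ (T' \ {t})) ∪ {t}) := by
        have : ((B ∪ S \ {x}) ∪ (T' \ {t})) ∪ {t} = (B ∪ S \ {x}) ∪ T' := by
          rw [Set.union_assoc, Set.diff_union_of_subset (by simpa using htT')]
        rw [this]; exact hxT'
      have h3 := P.exchange x t _ h1 (hmin t htT')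
      apply hT t (hT'sub htT')
      refine P.mono _ _ ?_ h3
      apply Set.union_subset
      · apply Set.union_subset
        · exact (Set.union_subset_union_right B (Set.diff_subset.trans hSA)).trans
            Set.subset_union_left
        · intro y hy
          exact Set.mem_union_right _ ⟨hT'sub hy.1, hy.2⟩
      · rw [Set.singleton_subset_iff]
        exact Set.mem_union_left _ (Set.mem_union_right _ (hSA hxS))
  · -- x ∈ T
    intro hcon
    apply hT x hxT
    refine P.mono _ _ ?_ hcon
    apply Set.union_subset
    · exact (Set.subset_union_left).trans Set.subset_union_left
    · intro y hy
      rcases hy.1 with hyS | hyT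
      · exact Set.mem_union_left _ (Set.mem_union_right _ (hSA hyS))
      · exact Set.mem_union_right _ ⟨hyT, hy.2⟩

lemma basis_union {B A A' S T : Set X} (hS : IsBasis P B A S) (hT : IsBasis P (B ∪ A) A' T)
    (hTfin : T.Finite) : IsBasis P B (A ∪ A') (S ∪ T) := by
  refine ⟨Set.union_subset_union hS.1 hT.1, indep_union_of P hS.2.1 hS.1 hT.2.1 hTfin, ?_⟩
  have hsubcl : (B ∪ A) ∪ T ⊆ P.cl (B ∪ (S ∪ T)) := by
    apply Set.union_subset
    · apply Set.union_subset
      · exact (Set.subset_union_left).trans (P.subset_cl _)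
      · refine hS.2.2.trans (P.mono _ _ ?_)
        exact Set.union_subset_union_right _ Set.subset_union_left
    · intro y hy
      exact P.subset_cl _ (Set.mem_union_right _ (Set.mem_union_right _ hy))
  apply Set.union_subset
  · refine hS.2.2.trans (P.mono _ _ ?_)
    exact Set.union_subset_union_right _ Set.subset_union_left
  · exact hT.2.2.trans (cl_subset_cl_of_subset_cl P hsubcl)

lemma nrk_union {A A' B : Set X} (hA : A.Finite) (hA' : A'.Finite) :
    nrk P (A ∪ A') B = nrk P A B + nrk P A' (B ∪ A) := by
  obtain ⟨S, hS, hfS⟩ := exists_finite_basis P A B hA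
  obtain ⟨T, hT, hfT⟩ := exists_finite_basis P A' (B ∪ A) hA'
  have hdisj : Disjoint S T := by
    rw [Set.disjoint_right]
    intro t ht hts
    exact hT.2.1 t ht (P.subset_cl _ (Set.mem_union_left _ (Set.mem_union_right _ (hS.1 hts))))
  rw [nrk_eq_of_basis P (basis_union P hS hT hfT) (hfS.union hfT),
    nrk_eq_of_basis P hS hfS, nrk_eq_of_basis P hT hfT,
    Set.ncard_union_eq hdisj hfS hfT]

lemma mk_eq_ncard {S : Set X} (h : S.Finite) : Cardinal.mk S = (S.ncard : Cardinal) := by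
  have : Finite ↥S := h.to_subtype
  rw [← Nat.card_coe_set_eq, Nat.card,
    Cardinal.cast_toNat_of_lt_aleph0 (Cardinal.lt_aleph0_of_finite _)]

lemma bddAbove_clRank (cl : Set X → Set X) (A B : Set X) :
    BddAbove (Set.range fun S : {S : Set X // S ⊆ A ∧ clIndep cl B S} => Cardinal.mk S.1) := by
  refine ⟨Cardinal.mk X, ?_⟩
  rintro c ⟨S, rfl⟩
  exact Cardinal.mk_set_le _

lemma clRank_eq_nrk {A B : Set X} (hex : ∃ S, IsBasis P B A S ∧ S.Finite) :
    clRank P.cl A B = (nrk P A B : Cardinal) := by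
  obtain ⟨S₀, hS₀, hfin₀⟩ := hex
  apply le_antisymm
  · apply ciSup_le'
    rintro ⟨S, hsub, hind⟩
    obtain ⟨hfin, hle⟩ := steinitz P hfin₀ hind (hsub.trans hS₀.2.2)
    rw [mk_eq_ncard hfin, nrk_eq_of_basis P hS₀ hfin₀]
    exact_mod_cast (steinitz P hfin₀ hind (hsub.trans hS₀.2.2)).2
  · have hle := le_ciSup (bddAbove_clRank P.cl A B) ⟨S₀, hS₀.1, hS₀.2.1⟩
    rw [mk_eq_ncard hfin₀] at hle
    rwa [nrk_eq_of_basis P hS₀ hfin₀]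

lemma clRank_eq_nrk_of_finite {A B : Set X} (hA : A.Finite) :
    clRank P.cl A B = (nrk P A B : Cardinal) :=
  clRank_eq_nrk P (exists_finite_basis P A B hA)

lemma clRank_eq_zero_iff {A B : Set X} : clRank P.cl A B = 0 ↔ A ⊆ P.cl B := by
  constructor
  · intro h0 a ha
    by_contra hacl
    have hind : clIndep P.cl B {a} := by
      intro s hs
      rw [Set.mem_singleton_iff] at hs
      subst hs
      simpa using hacl
    have hle := le_ciSup (bddAbove_clRank P.cl A B) ⟨{a}, Set.singleton_subset_iff.mpr ha, hind⟩
    rw [show (⨆ S : {S : Set X // S ⊆ A ∧ clIndep P.cl B S}, Cardinal.mk S.1)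
        = clRank P.cl A B from rfl, h0, Cardinal.mk_singleton] at hle
    exact absurd hle (by simp)
  · intro h
    apply le_antisymm _ zero_le
    apply ciSup_le'
    rintro ⟨S, hsub, hind⟩
    have hS : S = ∅ := by
      by_contra hne
      obtain ⟨s, hs⟩ := Set.nonempty_iff_ne_empty.mpr hne
      exact hind s hs (P.mono _ _ Set.subset_union_left (h (hsub hs)))
    subst hS
    simp

section Jets
variable (δ : X → X)

lemma mem_Jlt {A : Set X} {n : ℕ} {x : X} :
    x ∈ Jlt δ A n ↔ ∃ a ∈ A, ∃ i < n, δ^[i] a = x := by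
  simp [Jlt]

lemma mem_Jinf {A : Set X} {x : X} :
    x ∈ Jinf δ A ↔ ∃ a ∈ A, ∃ i, δ^[i] a = x := by
  simp [Jinf]

lemma Jlt_zero (A : Set X) : Jlt δ A 0 = ∅ := by
  ext x; simp [mem_Jlt]

lemma Jlt_succ (A : Set X) (n : ℕ) : Jlt δ A (n + 1) = Jlt δ A n ∪ δ^[n] '' A := by
  ext x
  simp only [mem_Jlt, Set.mem_union, Set.mem_image]
  constructor
  · rintro ⟨a, ha, i, hi, rfl⟩
    rcases Nat.lt_succ_iff_lt_or_eq.mp hi with h | rfl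
    · exact Or.inl ⟨a, ha, i, h, rfl⟩
    · exact Or.inr ⟨a, ha, rfl⟩
  · rintro (⟨a, ha, i, hi, rfl⟩ | ⟨a, ha, rfl⟩)
    · exact ⟨a, ha, i, Nat.lt_succ_of_lt hi, rfl⟩
    · exact ⟨a, ha, n, Nat.lt_succ_self n, rfl⟩

lemma Jlt_mono_n {m n : ℕ} (h : m ≤ n) (A : Set X) : Jlt δ A m ⊆ Jlt δ A n := by
  intro x hx
  rw [mem_Jlt] at *
  obtain ⟨a, ha, i, hi, rfl⟩ := hx
  exact ⟨a, ha, i, lt_of_lt_of_le hi h, rfl⟩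

lemma Jlt_mono_A {A A' : Set X} (h : A ⊆ A') (n : ℕ) : Jlt δ A n ⊆ Jlt δ A' n := by
  intro x hx
  rw [mem_Jlt] at *
  obtain ⟨a, ha, i, hi, rfl⟩ := hx
  exact ⟨a, h ha, i, hi, rfl⟩

lemma Jlt_union (A A' : Set X) (n : ℕ) : Jlt δ (A ∪ A') n = Jlt δ A n ∪ Jlt δ A' n := by
  ext x
  simp only [mem_Jlt, Set.mem_union]
  constructor
  · rintro ⟨a, ha | ha, i, hi, rfl⟩
    · exact Or.inl ⟨a, ha, i, hi, rfl⟩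
    · exact Or.inr ⟨a, ha, i, hi, rfl⟩
  · rintro (⟨a, ha, i, hi, rfl⟩ | ⟨a, ha, i, hi, rfl⟩)
    · exact ⟨a, Or.inl ha, i, hi, rfl⟩
    · exact ⟨a, Or.inr ha, i, hi, rfl⟩

lemma Jlt_subset_Jinf (A : Set X) (n : ℕ) : Jlt δ A n ⊆ Jinf δ A := by
  intro x hx
  rw [mem_Jlt] at hx
  rw [mem_Jinf]
  obtain ⟨a, ha, i, _, rfl⟩ := hx
  exact ⟨a, ha, i, rfl⟩

lemma Jinf_union (A A' : Set X) : Jinf δ (A ∪ A') = Jinf δ A ∪ Jinf δ A' := by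
  ext x
  simp only [mem_Jinf, Set.mem_union]
  constructor
  · rintro ⟨a, ha | ha, i, rfl⟩
    · exact Or.inl ⟨a, ha, i, rfl⟩
    · exact Or.inr ⟨a, ha, i, rfl⟩
  · rintro (⟨a, ha, i, rfl⟩ | ⟨a, ha, i, rfl⟩)
    · exact ⟨a, Or.inl ha, i, rfl⟩
    · exact ⟨a, Or.inr ha, i, rfl⟩

lemma Jinf_mono {A A' : Set X} (h : A ⊆ A') : Jinf δ A ⊆ Jinf δ A' := by
  intro x hx
  rw [mem_Jinf] at *
  obtain ⟨a, ha, i, rfl⟩ := hx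
  exact ⟨a, h ha, i, rfl⟩

lemma subset_Jinf (A : Set X) : A ⊆ Jinf δ A :=
  fun a ha => (mem_Jinf δ).mpr ⟨a, ha, 0, rfl⟩

lemma subset_Jlt_one (A : Set X) : A ⊆ Jlt δ A 1 :=
  fun a ha => (mem_Jlt δ).mpr ⟨a, ha, 0, Nat.zero_lt_one, rfl⟩

lemma image_Jlt (A : Set X) (n : ℕ) : δ '' Jlt δ A n ⊆ Jlt δ A (n + 1) := by
  rintro x ⟨y, hy, rfl⟩
  rw [mem_Jlt] at *
  obtain ⟨a, ha, i, hi, rfl⟩ := hy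
  exact ⟨a, ha, i + 1, Nat.succ_lt_succ hi, Function.iterate_succ_apply' δ i a⟩

lemma image_Jinf (A : Set X) : δ '' Jinf δ A ⊆ Jinf δ A := by
  rintro x ⟨y, hy, rfl⟩
  rw [mem_Jinf] at *
  obtain ⟨a, ha, i, rfl⟩ := hy
  exact ⟨a, ha, i + 1, Function.iterate_succ_apply' δ i a⟩

lemma iterate_mem_of_closed {B : Set X} (hB : δ '' B ⊆ B) :
    ∀ (i : ℕ) (b : X), b ∈ B → δ^[i] b ∈ B := by
  intro i
  induction i with
  | zero => intro b hb; simpa using hb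
  | succ i ih =>
    intro b hb
    rw [Function.iterate_succ_apply]
    exact ih _ (hB ⟨b, hb, rfl⟩)

lemma Jinf_eq_self {B : Set X} (hB : δ '' B ⊆ B) : Jinf δ B = B := by
  apply subset_antisymm _ (subset_Jinf δ B)
  intro x hx
  rw [mem_Jinf] at hx
  obtain ⟨b, hb, i, rfl⟩ := hx
  exact iterate_mem_of_closed δ hB i b hb

lemma Jlt_finite {A : Set X} (hA : A.Finite) (n : ℕ) : (Jlt δ A n).Finite := by
  have : Jlt δ A n ⊆ ⋃ i ∈ Set.Iio n, δ^[i] '' A := by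
    intro x hx
    rw [mem_Jlt] at hx
    obtain ⟨a, ha, i, hi, rfl⟩ := hx
    exact Set.mem_biUnion hi ⟨a, ha, rfl⟩
  exact ((Set.finite_Iio n).biUnion fun i _ => hA.image _).subset this

lemma Jlt_add (A : Set X) (n k : ℕ) :
    Jlt δ A (n + k) = Jlt δ A n ∪ δ^[n] '' (Jlt δ A k) := by
  ext x
  simp only [mem_Jlt, Set.mem_union, Set.mem_image]
  constructor
  · rintro ⟨a, ha, i, hi, rfl⟩
    by_cases h : i < n
    · exact Or.inl ⟨a, ha, i, h, rfl⟩
    · push_neg at h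
      refine Or.inr ⟨δ^[i - n] a, ⟨a, ha, i - n, by omega, rfl⟩, ?_⟩
      rw [← Function.iterate_add_apply]
      congr 1
      omega
  · rintro (⟨a, ha, i, hi, rfl⟩ | ⟨y, hy, rfl⟩)
    · exact ⟨a, ha, i, by omega, rfl⟩
    · obtain ⟨a, ha, j, hj, rfl⟩ := hy
      exact ⟨a, ha, n + j, by omega, (Function.iterate_add_apply δ n j a)⟩

lemma finite_subset_Jinf {C A : Set X} (hC : C.Finite) (h : C ⊆ Jinf δ A) :
    ∃ n, C ⊆ Jlt δ A n := by
  revert h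
  refine Set.Finite.induction_on
    (motive := fun C' _ => C' ⊆ Jinf δ A → ∃ n, C' ⊆ Jlt δ A n) C hC ?_ ?_
  · intro _; exact ⟨0, Set.empty_subset _⟩
  · intro x C' hxC' hC'fin ih h
    obtain ⟨n, hn⟩ := ih ((Set.subset_insert x C').trans h)
    obtain ⟨a, ha, i, hia⟩ := (mem_Jinf δ).mp (h (Set.mem_insert x C'))
    refine ⟨max (i + 1) n, Set.insert_subset ?_ (hn.trans (Jlt_mono_n δ (le_max_right _ _) A))⟩
    exact (mem_Jlt δ).mpr ⟨a, ha, i, by omega, hia⟩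

end Jets

section Main

/-- The stage-`n` rank `rk(δⁿA | J^{n-1}(A) ∪ B)`. -/
noncomputable def Rseq (δ : X → X) (A B : Set X) (n : ℕ) : ℕ :=
  nrk P (δ^[n] '' A) (Jlt δ A n ∪ B)

variable (δ : X → X)

lemma step_base_eq {B : Set X} (hB : δ '' B ⊆ B) (A : Set X) (n : ℕ) :
    (δ^[n] '' A) ∪ (Jlt δ A n ∪ B) ∪ δ '' (Jlt δ A n ∪ B) = Jlt δ A (n + 1) ∪ B := by
  apply subset_antisymm
  · apply Set.union_subset
    · apply Set.union_subset
      · intro x hx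
        rw [Jlt_succ]
        exact Set.mem_union_left _ (Set.mem_union_right _ hx)
      · apply Set.union_subset_union_left
        exact Jlt_mono_n δ (Nat.le_succ n) A
    · rw [Set.image_union]
      apply Set.union_subset
      · exact (image_Jlt δ A n).trans Set.subset_union_left
      · exact hB.trans Set.subset_union_right
  · apply Set.union_subset
    · rw [Jlt_succ]
      apply Set.union_subset
      · intro x hx
        exact Set.mem_union_left _ (Set.mem_union_right _ (Set.mem_union_left _ hx))
      · intro x hx
        exact Set.mem_union_left _ (Set.mem_union_left _ hx)
    · intro x hx
      exact Set.mem_union_left _ (Set.mem_union_right _ (Set.mem_union_right _ hx))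

lemma clRank_step (hδ : IsQuasiEndo P δ) {B : Set X} (hB : δ '' B ⊆ B) (A : Set X) (n : ℕ) :
    clRank P.cl (δ^[n+1] '' A) (Jlt δ A (n+1) ∪ B)
      ≤ clRank P.cl (δ^[n] '' A) (Jlt δ A n ∪ B) := by
  have h := hδ (δ^[n] '' A) (Jlt δ A n ∪ B)
  have himg : δ '' (δ^[n] '' A) = δ^[n+1] '' A := by
    rw [Set.image_image]
    apply Set.image_congr
    intro a _
    exact (Function.iterate_succ_apply' δ n a).symm
  rw [himg, step_base_eq δ hB] at h
  exact h

lemma Rseq_antitone (hδ : IsQuasiEndo P δ) {A B : Set X} (hA : A.Finite) (hB : δ '' B ⊆ B) :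
    Antitone (Rseq P δ A B) := by
  apply antitone_nat_of_succ_le
  intro n
  have h := clRank_step P δ hδ hB A n
  rw [clRank_eq_nrk_of_finite P (hA.image _), clRank_eq_nrk_of_finite P (hA.image _)] at h
  exact_mod_cast h

lemma nrk_Jlt_eq_sum {A B : Set X} (hA : A.Finite) (n : ℕ) :
    nrk P (Jlt δ A n) B = ∑ i ∈ Finset.range n, Rseq P δ A B i := by
  induction n with
  | zero =>
    rw [Jlt_zero, Finset.sum_range_zero]
    exact (nrk_zero_iff P Set.finite_empty).mpr (Set.empty_subset _)
  | succ n ih =>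
    rw [Jlt_succ, nrk_union P (Jlt_finite δ hA n) (hA.image _), ih, Finset.sum_range_succ]
    congr 1
    unfold Rseq
    rw [Set.union_comm]

/-- The eventual value of the rank sequence. -/
noncomputable def lam (δ : X → X) (A B : Set X) : ℕ :=
  sInf (Set.range (Rseq P δ A B))

lemma lam_spec (hδ : IsQuasiEndo P δ) {A B : Set X} (hA : A.Finite) (hB : δ '' B ⊆ B) :
    ∃ N, ∀ k, N ≤ k → Rseq P δ A B k = lam P δ A B := by
  obtain ⟨N, hN⟩ := Nat.sInf_mem (Set.range_nonempty (Rseq P δ A B))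
  refine ⟨N, fun k hk => ?_⟩
  apply le_antisymm
  · unfold lam
    rw [← hN]
    exact Rseq_antitone P δ hδ hA hB hk
  · exact Nat.sInf_le ⟨k, rfl⟩

lemma sum_eq_of_stab {A B : Set X} {N : ℕ}
    (hstab : ∀ k, N ≤ k → Rseq P δ A B k = lam P δ A B) :
    ∀ n, N ≤ n → ∑ i ∈ Finset.range n, Rseq P δ A B i
      = (∑ i ∈ Finset.range N, Rseq P δ A B i) + (n - N) * lam P δ A B := by
  intro n hn
  induction n, hn using Nat.le_induction with
  | base => simp
  | succ n hn ih =>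
    rw [Finset.sum_range_succ, ih, hstab n hn]
    have : n + 1 - N = (n - N) + 1 := by omega
    rw [this]
    ring

lemma nrk_Jlt_le (hδ : IsQuasiEndo P δ) {A B : Set X} (hA : A.Finite) (hB : δ '' B ⊆ B) :
    ∃ C, ∀ n, nrk P (Jlt δ A n) B ≤ C + lam P δ A B * n ∧
      lam P δ A B * n ≤ C + nrk P (Jlt δ A n) B := by
  obtain ⟨N, hN⟩ := lam_spec P δ hδ hA hB
  set C0 := ∑ i ∈ Finset.range N, Rseq P δ A B i with hC0
  refine ⟨C0 + lam P δ A B * N, fun n => ?_⟩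
  rw [nrk_Jlt_eq_sum P δ hA]
  rcases le_or_gt N n with h | h
  · rw [sum_eq_of_stab P δ hN n h]
    constructor
    · have : (n - N) * lam P δ A B ≤ lam P δ A B * n := by
        rw [mul_comm]
        exact Nat.mul_le_mul_left _ (Nat.sub_le n N)
      omega
    · have : lam P δ A B * n ≤ lam P δ A B * N + (n - N) * lam P δ A B := by
        rw [mul_comm (n - N)]
        rw [← Nat.mul_add]
        exact Nat.mul_le_mul_left _ (by omega)
      omega
  · constructor
    · have hle : ∑ i ∈ Finset.range n, Rseq P δ A B i ≤ C0 := by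
        rw [hC0]
        apply Finset.sum_le_sum_of_subset
        exact Finset.range_subset_range.mpr h.le
      omega
    · have : lam P δ A B * n ≤ lam P δ A B * N := Nat.mul_le_mul_left _ h.le
      omega

lemma push_cl (hδ : IsQuasiEndo P δ) {x : X} {C : Set X} (hx : x ∈ P.cl C) :
    δ x ∈ P.cl (C ∪ δ '' C) := by
  have h := hδ {x} C
  have h0 : clRank P.cl {x} C = 0 :=
    (clRank_eq_zero_iff P).mpr (Set.singleton_subset_iff.mpr hx)
  rw [h0, le_zero_iff] at h
  have hmem : δ x ∈ P.cl ({x} ∪ C ∪ δ '' C) := by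
    have := (clRank_eq_zero_iff P).mp h
    rw [Set.image_singleton] at this
    exact this rfl
  refine cl_subset_cl_of_subset_cl P ?_ hmem
  apply Set.union_subset
  · apply Set.union_subset
    · rw [Set.singleton_subset_iff]
      exact P.mono _ _ Set.subset_union_left hx
    · exact (Set.subset_union_left).trans (P.subset_cl _)
  · exact (Set.subset_union_right).trans (P.subset_cl _)

end Main

section Delta
variable (δ : X → X)

lemma unbounded_of_infinite_rank {a : X} {E : Set X}
    (h : ¬ clRank P.cl (Jinf δ {a}) E < Cardinal.aleph0) :
    ∀ n : ℕ, ∃ m, n ≤ nrk P (Jlt δ {a} m) E := by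
  push_neg at h
  intro n
  have hlt : (n : Cardinal) < clRank P.cl (Jinf δ {a}) E :=
    lt_of_lt_of_le (Cardinal.nat_lt_aleph0 n) h
  have hex : ∃ S : {S : Set X // S ⊆ Jinf δ {a} ∧ clIndep P.cl E S},
      ¬ Cardinal.mk S.1 ≤ (n : Cardinal) := by
    by_contra hc
    push_neg at hc
    exact absurd (ciSup_le' hc : clRank P.cl (Jinf δ {a}) E ≤ (n : Cardinal))
      (not_le.mpr hlt)
  obtain ⟨⟨S, hsub, hind⟩, hS⟩ := hex
  rw [not_le] at hS
  obtain ⟨S₀, hsub₀, hfin₀, hcard₀⟩ : ∃ S₀ ⊆ S, S₀.Finite ∧ n ≤ S₀.ncard := by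
    by_cases hfin : S.Finite
    · refine ⟨S, subset_rfl, hfin, ?_⟩
      rw [mk_eq_ncard hfin] at hS
      exact_mod_cast hS.le
    · have hinf' : S.Infinite := hfin
      obtain ⟨S₀, h1, h2, h3⟩ := hinf'.exists_subset_ncard_eq n
      exact ⟨S₀, h1, h2, h3.ge⟩
  obtain ⟨m, hm⟩ := finite_subset_Jinf δ hfin₀ (hsub₀.trans hsub)
  refine ⟨m, le_trans hcard₀ ?_⟩
  exact indep_ncard_le_nrk P (Jlt_finite δ (Set.finite_singleton a) m) hm
    (indep_subset P hsub₀ hind)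

lemma exists_finite_basis_Jinf {a : X} {E : Set X}
    (h : clRank P.cl (Jinf δ {a}) E < Cardinal.aleph0) :
    ∃ W, IsBasis P E (Jinf δ {a}) W ∧ W.Finite := by
  obtain ⟨d, hd⟩ := Cardinal.lt_aleph0.mp h
  apply exists_finite_basis'
  refine ⟨d, fun S hsub hind hfin => ?_⟩
  have hle := le_ciSup (bddAbove_clRank P.cl (Jinf δ {a}) E) ⟨S, hsub, hind⟩
  rw [show (⨆ S : {S : Set X // S ⊆ Jinf δ {a} ∧ clIndep P.cl E S}, Cardinal.mk S.1)
      = clRank P.cl (Jinf δ {a}) E from rfl, hd, mk_eq_ncard hfin] at hle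
  exact_mod_cast hle

lemma slope_le {r r' K : ℕ} (h : ∀ n, r * n ≤ K + r' * n) : r ≤ r' := by
  by_contra hc
  push_neg at hc
  have h1 := h (K + 1)
  have h2 : (r' + 1) * (K + 1) ≤ r * (K + 1) := Nat.mul_le_mul_right _ hc
  have h3 : (r' + 1) * (K + 1) = r' * (K + 1) + K + 1 := by ring
  omega

/-- Each element of a `clDelta`-independent set contributes slope at least 1. -/
lemma key_ge (hδ : IsQuasiEndo P δ) {B S : Set X} (hB : δ '' B ⊆ B) (hSfin : S.Finite)
    (hind : clIndep (clDelta P δ) B S) {s : X} (hs : s ∈ S) :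
    ∀ n : ℕ, n ≤ nrk P (Jlt δ {s} n) (B ∪ Jinf δ (S \ {s})) := by
  set E := B ∪ Jinf δ (S \ {s}) with hE
  have hEδ : δ '' E ⊆ E := by
    rw [hE, Set.image_union]
    exact Set.union_subset (hB.trans Set.subset_union_left)
      ((image_Jinf δ _).trans Set.subset_union_right)
  have hEeq : Jinf δ (B ∪ (S \ {s})) = E := by
    rw [Jinf_union, Jinf_eq_self δ hB]
  have hinf : ¬ clRank P.cl (Jinf δ {s}) E < Cardinal.aleph0 := by
    have := hind s hs
    rw [clDelta, Set.mem_setOf_eq, hEeq] at this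
    exact this
  have hub := unbounded_of_infinite_rank P δ hinf
  -- all Rseq values are ≥ 1
  have hone : ∀ i, 1 ≤ Rseq P δ {s} E i := by
    intro i
    by_contra hzero
    push_neg at hzero
    rw [Nat.lt_one_iff] at hzero
    obtain ⟨m, hm⟩ := hub (1 + ∑ j ∈ Finset.range i, Rseq P δ {s} E j)
    rw [nrk_Jlt_eq_sum P δ (Set.finite_singleton s)] at hm
    have hbd : ∑ j ∈ Finset.range m, Rseq P δ {s} E j
        ≤ ∑ j ∈ Finset.range i, Rseq P δ {s} E j := by
      rcases le_or_gt m i with h | h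
      · exact Finset.sum_le_sum_of_subset (Finset.range_subset_range.mpr h)
      · have : ∀ j ∈ Finset.range m, j ∉ Finset.range i → Rseq P δ {s} E j = 0 := by
          intro j _ hj
          rw [Finset.mem_range, not_lt] at hj
          exact Nat.le_antisymm
            ((Rseq_antitone P δ hδ (Set.finite_singleton s) hEδ hj).trans hzero.le)
            (Nat.zero_le _)
        exact le_of_eq (Finset.sum_subset (Finset.range_subset_range.mpr h.le) this).symm
    omega
  intro n
  rw [nrk_Jlt_eq_sum P δ (Set.finite_singleton s)]
  calc (n : ℕ) = ∑ _j ∈ Finset.range n, 1 := by simp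
  _ ≤ ∑ j ∈ Finset.range n, Rseq P δ {s} E j := Finset.sum_le_sum fun j _ => hone j

end Delta

section Upper
variable (δ : X → X)

lemma sum_slope (hδ : IsQuasiEndo P δ) {B S : Set X} (hB : δ '' B ⊆ B) (hSfin : S.Finite)
    (hind : clIndep (clDelta P δ) B S) (n : ℕ) :
    S.ncard * n ≤ nrk P (Jlt δ S n) B := by
  have hmain : ∀ S' , S'.Finite → S' ⊆ S → S'.ncard * n ≤ nrk P (Jlt δ S' n) B := by
    intro S' hS'fin
    refine Set.Finite.induction_on
      (motive := fun S' _ => S' ⊆ S → S'.ncard * n ≤ nrk P (Jlt δ S' n) B) S' hS'fin ?_ ?_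
    · intro _
      simp
    · intro s S'' hsS'' hS''fin ih hsub
      have hsS : s ∈ S := hsub (Set.mem_insert s S'')
      have hS''S : S'' ⊆ S := (Set.subset_insert s S'').trans hsub
      have hJ : Jlt δ (insert s S'') n = Jlt δ S'' n ∪ Jlt δ {s} n := by
        rw [Set.insert_eq, Jlt_union, Set.union_comm]
      rw [hJ, nrk_union P (Jlt_finite δ hS''fin n) (Jlt_finite δ (Set.finite_singleton s) n),
        Set.ncard_insert_of_notMem hsS'' hS''fin]
      have hbase : B ∪ Jlt δ S'' n ⊆ B ∪ Jinf δ (S \ {s}) := by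
        apply Set.union_subset_union_right
        refine (Jlt_subset_Jinf δ S'' n).trans (Jinf_mono δ ?_)
        intro x hx
        exact ⟨hS''S hx, fun he => hsS'' (he ▸ hx)⟩
      have h2 : n ≤ nrk P (Jlt δ {s} n) (B ∪ Jlt δ S'' n) :=
        le_trans (key_ge P δ hδ hB hSfin hind hsS n)
          (nrk_anti_base P (Jlt_finite δ (Set.finite_singleton s) n) hbase)
      have h1 := ih hS''S
      nlinarith [h1, h2]
  exact hmain S hSfin subset_rfl

lemma ncard_le_lam (hδ : IsQuasiEndo P δ) {A B S : Set X} (hA : A.Finite) (hB : δ '' B ⊆ B)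
    (hsub : S ⊆ A) (hind : clIndep (clDelta P δ) B S) : S.ncard ≤ lam P δ A B := by
  obtain ⟨C, hC⟩ := nrk_Jlt_le P δ hδ hA hB
  apply slope_le (K := C)
  intro n
  calc S.ncard * n ≤ nrk P (Jlt δ S n) B := sum_slope P δ hδ hB (hA.subset hsub) hind n
  _ ≤ nrk P (Jlt δ A n) B :=
      nrk_mono P (Jlt_finite δ (hA.subset hsub) n) (Jlt_finite δ hA n) (Jlt_mono_A δ hsub n)
  _ ≤ C + lam P δ A B * n := (hC n).1

end Upper

section Lower
variable (δ : X → X)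

lemma jet_span_of_dep (hδ : IsQuasiEndo P δ) {A B : Set X} (hB : δ '' B ⊆ B) {a : X}
    (hdep : a ∈ clDelta P δ (B ∪ (A \ {a}))) :
    ∃ n0 k : ℕ, ∀ n, Jlt δ {a} n ⊆
      P.cl (B ∪ Jlt δ (A \ {a}) (k + n) ∪ Jlt δ {a} n0) := by
  set A' := A \ {a} with hA'
  set E := B ∪ Jinf δ A' with hEdef
  have hEeq : Jinf δ (B ∪ A') = E := by
    rw [Jinf_union, Jinf_eq_self δ hB]
  rw [clDelta, Set.mem_setOf_eq, hEeq] at hdep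
  obtain ⟨W, hW, hWfin⟩ := exists_finite_basis_Jinf P δ hdep
  obtain ⟨n0, hn0⟩ := finite_subset_Jinf δ hWfin hW.1
  -- δ^[n0] a ∈ cl (E ∪ Jlt δ {a} n0)
  have hspan : δ^[n0] a ∈ P.cl (E ∪ Jlt δ {a} n0) := by
    have h1 : δ^[n0] a ∈ P.cl (E ∪ W) := hW.2.2 ((mem_Jinf δ).mpr ⟨a, rfl, n0, rfl⟩)
    exact P.mono _ _ (Set.union_subset_union_right E hn0) h1
  -- finitary: extract a finite part of Jinf A'
  obtain ⟨F, hFsub, hFmem⟩ := P.finitary _ _ hspan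
  obtain ⟨k, hk⟩ : ∃ k, (↑F \ (B ∪ Jlt δ {a} n0) : Set X) ⊆ Jlt δ A' k := by
    apply finite_subset_Jinf δ ((F.finite_toSet).diff)
    intro x hx
    rcases hFsub hx.1 with (hxB | hxJ) | hxa
    · exact absurd (Set.mem_union_left _ hxB) hx.2
    · exact hxJ
    · exact absurd (Set.mem_union_right _ hxa) hx.2
  have hstart : δ^[n0] a ∈ P.cl (B ∪ Jlt δ A' k ∪ Jlt δ {a} n0) := by
    refine P.mono _ _ ?_ hFmem
    intro x hx
    by_cases hmem : x ∈ B ∪ Jlt δ {a} n0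
    · rcases hmem with h | h
      · exact Set.mem_union_left _ (Set.mem_union_left _ h)
      · exact Set.mem_union_right _ h
    · exact Set.mem_union_left _ (Set.mem_union_right _ (hk ⟨hx, hmem⟩))
  -- push forward with δ
  have hpush : ∀ j, δ^[n0 + j] a ∈ P.cl (B ∪ Jlt δ A' (k + j) ∪ Jlt δ {a} (n0 + j)) := by
    intro j
    induction j with
    | zero => simpa using hstart
    | succ j ih =>
      have hp := push_cl P δ hδ ih
      set C := B ∪ Jlt δ A' (k + j) ∪ Jlt δ {a} (n0 + j) with hC
      have hCsub : C ∪ δ '' C ⊆ B ∪ Jlt δ A' (k + (j+1)) ∪ Jlt δ {a} (n0 + (j+1)) := by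
        apply Set.union_subset
        · apply Set.union_subset_union
          · exact Set.union_subset_union_right B (Jlt_mono_n δ (Nat.add_le_add_left (Nat.le_succ j) k) A')
          · exact Jlt_mono_n δ (Nat.add_le_add_left (Nat.le_succ j) n0) {a}
        · rw [hC, Set.image_union, Set.image_union]
          apply Set.union_subset
          · apply Set.union_subset
            · exact hB.trans ((Set.subset_union_left).trans Set.subset_union_left)
            · refine (image_Jlt δ A' (k+j)).trans ?_
              refine (Jlt_mono_n δ (show k+j+1 ≤ k+(j+1) by omega) A').trans ?_
              exact (Set.subset_union_right).trans Set.subset_union_left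
          · refine (image_Jlt δ {a} (n0+j)).trans ?_
            refine (Jlt_mono_n δ (show n0+j+1 ≤ n0+(j+1) by omega) {a}).trans Set.subset_union_right
      have heq : δ (δ^[n0 + j] a) = δ^[n0 + (j+1)] a := by
        rw [show n0 + (j + 1) = (n0 + j) + 1 by omega, Function.iterate_succ_apply']
      rw [← heq]
      exact P.mono _ _ hCsub hp
  refine ⟨n0, k, fun n => ?_⟩
  induction n with
  | zero => rw [Jlt_zero]; exact Set.empty_subset _
  | succ n ih =>
    rw [Jlt_succ, Set.image_singleton]
    have hDmono : B ∪ Jlt δ A' (k + n) ∪ Jlt δ {a} n0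
        ⊆ B ∪ Jlt δ A' (k + (n+1)) ∪ Jlt δ {a} n0 := by
      apply Set.union_subset_union_left
      apply Set.union_subset_union_right
      exact Jlt_mono_n δ (by omega) A'
    apply Set.union_subset
    · exact ih.trans (P.mono _ _ hDmono)
    · rw [Set.singleton_subset_iff]
      rcases lt_or_ge n n0 with h | h
      · apply P.subset_cl
        exact Set.mem_union_right _ ((mem_Jlt δ).mpr ⟨a, rfl, n, h, rfl⟩)
      · have hj := hpush (n - n0)
        rw [show n0 + (n - n0) = n by omega] at hj
        have hsub2 : B ∪ Jlt δ A' (k + (n - n0)) ∪ Jlt δ {a} n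
            ⊆ P.cl (B ∪ Jlt δ A' (k + (n+1)) ∪ Jlt δ {a} n0) := by
          apply Set.union_subset
          · refine Set.Subset.trans ?_ (P.subset_cl _)
            refine Set.Subset.trans
              (Set.union_subset_union_right B (Jlt_mono_n δ (by omega) A'))
              Set.subset_union_left
          · exact ih.trans (P.mono _ _ hDmono)
        exact cl_subset_cl_of_subset_cl P hsub2 hj

lemma lam_le_of_dep (hδ : IsQuasiEndo P δ) {A B : Set X} (hA : A.Finite) (hB : δ '' B ⊆ B)
    {a : X} (ha : a ∈ A) (hdep : a ∈ clDelta P δ (B ∪ (A \ {a}))) :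
    lam P δ A B ≤ lam P δ (A \ {a}) B := by
  set A' := A \ {a} with hA'
  have hA'fin : A'.Finite := hA.diff
  obtain ⟨n0, k, hjet⟩ := jet_span_of_dep P δ hδ hB hdep
  set c0 := (Jlt δ A' k).ncard + (Jlt δ {a} n0).ncard with hc0
  -- stage-wise comparison
  have hcomp : ∀ n, nrk P (Jlt δ A n) B ≤ nrk P (Jlt δ A' n) B + c0 := by
    intro n
    have hAeq : A = A' ∪ {a} := by
      rw [hA', Set.diff_union_of_subset (Set.singleton_subset_iff.mpr ha)]
    rw [hAeq, Jlt_union, nrk_union P (Jlt_finite δ hA'fin n)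
      (Jlt_finite δ (Set.finite_singleton a) n)]
    have hT : Jlt δ {a} n ⊆ P.cl ((B ∪ Jlt δ A' n) ∪ (δ^[n] '' (Jlt δ A' k) ∪ Jlt δ {a} n0)) := by
      refine (hjet n).trans (P.mono _ _ ?_)
      intro x hx
      rcases hx with (hxB | hxJ) | hxa
      · exact Set.mem_union_left _ (Set.mem_union_left _ hxB)
      · rw [show k + n = n + k by omega, Jlt_add] at hxJ
        rcases hxJ with h | h
        · exact Set.mem_union_left _ (Set.mem_union_right _ h)
        · exact Set.mem_union_right _ (Set.mem_union_left _ h)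
      · exact Set.mem_union_right _ (Set.mem_union_right _ hxa)
    have hle := nrk_le_of_span P (((Jlt_finite δ hA'fin k).image _).union
      (Jlt_finite δ (Set.finite_singleton a) n0)) hT
    have hcard : (δ^[n] '' (Jlt δ A' k) ∪ Jlt δ {a} n0).ncard ≤ c0 := by
      refine (Set.ncard_union_le _ _).trans ?_
      rw [hc0]
      have := Set.ncard_image_le (s := Jlt δ A' k) (f := δ^[n]) (Jlt_finite δ hA'fin k)
      omega
    omega
  -- compare slopes
  obtain ⟨C1, hC1⟩ := nrk_Jlt_le P δ hδ hA hB
  obtain ⟨C2, hC2⟩ := nrk_Jlt_le P δ hδ hA'fin hB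
  apply slope_le (K := C1 + C2 + c0)
  intro n
  calc lam P δ A B * n ≤ C1 + nrk P (Jlt δ A n) B := (hC1 n).2
  _ ≤ C1 + (nrk P (Jlt δ A' n) B + c0) := by have := hcomp n; omega
  _ ≤ C1 + (C2 + lam P δ A' B * n + c0) := by have := (hC2 n).1; omega
  _ = C1 + C2 + c0 + lam P δ A' B * n := by ring

end Lower

lemma exists_indep_of_lam (δ : X → X) (hδ : IsQuasiEndo P δ) :
    ∀ (m : ℕ) (A B : Set X), A.Finite → δ '' B ⊆ B → A.ncard = m →
    ∃ S, S ⊆ A ∧ clIndep (clDelta P δ) B S ∧ S.Finite ∧ lam P δ A B ≤ S.ncard := by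
  intro m
  induction m using Nat.strong_induction_on with
  | _ m ih =>
    intro A B hA hB hm
    by_cases hcase : ∃ a ∈ A, a ∈ clDelta P δ (B ∪ (A \ {a}))
    · obtain ⟨a, ha, hdep⟩ := hcase
      have hlt : (A \ {a}).ncard < m := hm ▸ Set.ncard_diff_singleton_lt_of_mem ha hA
      obtain ⟨S, h1, h2, h3, h4⟩ := ih _ hlt (A \ {a}) B (hA.diff) hB rfl
      refine ⟨S, h1.trans Set.diff_subset, h2, h3, ?_⟩
      exact le_trans (lam_le_of_dep P δ hδ hA hB ha hdep) h4
    · push_neg at hcase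
      refine ⟨A, subset_rfl, hcase, hA, ?_⟩
      have h1 : lam P δ A B ≤ Rseq P δ A B 0 := Nat.sInf_le ⟨0, rfl⟩
      have h2 : Rseq P δ A B 0 ≤ A.ncard := by
        unfold Rseq
        rw [Function.iterate_zero, Set.image_id]
        exact nrk_le_ncard P hA
      omega

theorem main_result (δ : X → X) (hδ : IsQuasiEndo P δ) (A B : Set X)
    (hA : A.Finite) (hB : δ '' B ⊆ B) :
    (∀ n : ℕ, clRank P.cl (δ^[n+1] '' A) (Jlt δ A (n+1) ∪ B)
        ≤ clRank P.cl (δ^[n] '' A) (Jlt δ A n ∪ B)) ∧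
    ∃ N : ℕ, ∀ k : ℕ, N ≤ k →
      clRank P.cl (δ^[k] '' A) (Jlt δ A k ∪ B) = clRank (clDelta P δ) A B := by
  constructor
  · exact fun n => clRank_step P δ hδ hB A n
  · obtain ⟨N, hN⟩ := lam_spec P δ hδ hA hB
    have hrkdelta : clRank (clDelta P δ) A B = (lam P δ A B : Cardinal) := by
      apply le_antisymm
      · apply ciSup_le'
        rintro ⟨S, hsub, hind⟩
        have hSfin : S.Finite := hA.subset hsub
        rw [mk_eq_ncard hSfin]
        exact_mod_cast ncard_le_lam P δ hδ hA hB hsub hind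
      · obtain ⟨S, h1, h2, h3, h4⟩ := exists_indep_of_lam P δ hδ A.ncard A B hA hB rfl
        have hle := le_ciSup (bddAbove_clRank (clDelta P δ) A B) ⟨S, h1, h2⟩
        rw [mk_eq_ncard h3] at hle
        refine le_trans ?_ hle
        exact_mod_cast h4
    refine ⟨N, fun k hk => ?_⟩
    rw [clRank_eq_nrk_of_finite P (hA.image _), hrkdelta]
    exact_mod_cast hN k hk

end QE

/-- For `A` finite and `B` closed under `δ`, the sequence
`n ↦ rk(δⁿA | J^{n-1}(A) ∪ B)` is non-increasing, hence eventually constant, and its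
eventual value is the rank `rk^δ(A | B)` of the matroid `(X, cl^δ)`. -/
theorem rkDelta_eq_eventual_rank {X : Type*} (P : Pregeometry X) (δ : X → X)
    (hδ : IsQuasiEndo P δ) (A B : Set X) (hA : A.Finite) (hB : δ '' B ⊆ B) :
    (∀ n : ℕ, clRank P.cl (δ^[n+1] '' A) (Jlt δ A (n+1) ∪ B)
        ≤ clRank P.cl (δ^[n] '' A) (Jlt δ A n ∪ B)) ∧
    ∃ N : ℕ, ∀ k : ℕ, N ≤ k →
      clRank P.cl (δ^[k] '' A) (Jlt δ A k ∪ B) = clRank (clDelta P δ) A B :=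
  QE.main_result P δ hδ A B hA hB
end
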